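/- arXiv:math/0611312 — 5 statements merged into one kernel-verified Lean document; each statement's English description precedes it below -/
import Mathlib

section
/- Let B₁, …, Bₙ (or an arbitrary family Bᵢ, i ∈ I) be finite-dimensional k-algebras and let A* = ∏ᵢ Bᵢ. Then the subset { b ∈ A* : dim_k (A*·b) < ∞ } equals the direct sum ⊕ᵢ Bᵢ ⊆ ∏ᵢ Bᵢ. -/
/-- For a family `(Bᵢ)` of finite-dimensional algebras over a field `k`
and `A* = ∏ᵢ Bᵢ`, the set of `b ∈ A*` such that the left ideal `A*·b`
(equivalently, its underlying `k`-vector space, spanned by `{a * b : a ∈ A*}`)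
is finite-dimensional over `k` is exactly the direct sum `⊕ᵢ Bᵢ`, i.e. the set
of elements of finite support. -/
theorem stmt_1 (k : Type*) [Field k] {I : Type*} (B : I → Type*)
    [∀ i, Ring (B i)] [∀ i, Algebra k (B i)] [∀ i, FiniteDimensional k (B i)] :
    {b : ∀ i, B i |
      FiniteDimensional k (Submodule.span k {x : ∀ i, B i | ∃ a : ∀ i, B i, x = a * b})} =
    {b : ∀ i, B i | Set.Finite {i | b i ≠ 0}} := by
  classical
  ext b
  simp only [Set.mem_setOf_eq]
  constructor
  · intro hfd
    set p := Submodule.span k {x : ∀ i, B i | ∃ a : ∀ i, B i, x = a * b} with hp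
    -- the family of elements with disjoint supports
    set w : {i | b i ≠ 0} → (∀ i, B i) := fun j => Pi.single (j : I) (b j) with hw
    have hwmem : ∀ j, w j ∈ p := by
      intro j
      apply Submodule.subset_span
      refine ⟨Pi.single (j : I) 1, ?_⟩
      funext i
      by_cases h : i = (j : I)
      · subst h; simp [hw, Pi.mul_apply]
      · simp [hw, Pi.single_apply, h]
    have hli : LinearIndependent k w := by
      rw [linearIndependent_iff']
      intro s g hsum j hj
      have := congrFun hsum (j : I)
      simp only [Finset.sum_apply, Pi.smul_apply, Pi.zero_apply] at this
      rw [Finset.sum_eq_single j] at this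
      · simp only [hw, Pi.single_eq_same] at this
        rcases smul_eq_zero.mp this with h | h
        · exact h
        · exact absurd h j.2
      · intro l _ hlj
        have : (l : I) ≠ (j : I) := fun h => hlj (Subtype.ext h)
        simp [hw, Pi.single_apply, this.symm]
      · intro h; exact absurd hj h
    have hli' : LinearIndependent k (fun j => (⟨w j, hwmem j⟩ : p)) := by
      apply LinearIndependent.of_comp p.subtype
      exact hli
    have : Finite {i | b i ≠ 0} := hli'.finite
    exact Set.toFinite _
  · intro hb
    haveI : Fintype {i | b i ≠ 0} := hb.fintype
    -- the submodule of elements supported on the support of b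
    set P : Submodule k (∀ i, B i) :=
      { carrier := {x | ∀ i, b i = 0 → x i = 0}
        add_mem' := fun hx hy i hi => by simp [hx i hi, hy i hi]
        zero_mem' := fun i _ => rfl
        smul_mem' := fun c x hx i hi => by simp [hx i hi] } with hP
    have e : P ≃ₗ[k] (∀ j : {i | b i ≠ 0}, B j) :=
      { toFun := fun x j => (x : ∀ i, B i) j
        map_add' := fun x y => rfl
        map_smul' := fun c x => rfl
        invFun := fun y => ⟨fun i => if h : b i ≠ 0 then y ⟨i, h⟩ else 0,
          fun i hi => by simp [hi]⟩
        left_inv := by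
          intro x
          ext i
          by_cases h : b i ≠ 0
          · simp [h]
          · push_neg at h
            simp [h, x.2 i h]
        right_inv := by
          intro y
          funext j
          show (if h : b (j:I) ≠ 0 then y ⟨(j:I), h⟩ else 0) = y j
          exact dif_pos j.2 }
    haveI : FiniteDimensional k P := Module.Finite.equiv e.symm
    have hle : Submodule.span k {x : ∀ i, B i | ∃ a : ∀ i, B i, x = a * b} ≤ P := by
      rw [Submodule.span_le]
      rintro x ⟨a, rfl⟩ i hi
      simp [Pi.mul_apply, hi]
    exact Submodule.finiteDimensional_of_le hle
end

section
/- Let k be a field of characteristic 0 and E an n-dimensional k-vector space. The ring of polynomial functions on End_k(E) invariant under the action of SL(E) (acting by left multiplication, i.e. (g·f)(T) = f(g⁻¹T)) is the polynomial subring k[det] generated by the determinant function. -/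
open Matrix MvPolynomial

namespace Stmt10Aux

variable {F : Type*} [Field F] {n : ℕ}

/-- The submonoid of `n×n` matrices generated by transvections. -/
def TS (F : Type*) [Field F] (n : ℕ) : Submonoid (Matrix (Fin n) (Fin n) F) :=
  Submonoid.closure
    (Set.range (TransvectionStruct.toMatrix : TransvectionStruct (Fin n) F → _))

lemma transvection_mem {i j : Fin n} (hij : i ≠ j) (c : F) :
    transvection i j c ∈ TS F n :=
  Submonoid.subset_closure ⟨⟨i, j, hij, c⟩, TransvectionStruct.toMatrix_mk i j hij c⟩

lemma diagPair_eq {i j : Fin n} (hij : i ≠ j) {a : F} (ha : a ≠ 0) :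
    (diagonal fun l => if l = i then a else if l = j then a⁻¹ else 1) =
      transvection i j a * transvection j i (-a⁻¹) * transvection i j a *
      transvection i j (-1) * transvection j i 1 * transvection i j (-1) := by
  have hji := hij.symm
  have h1 : ∀ (x y : Fin n) (c d : F), single x j c * single i y d = 0 :=
    fun x y c d => single_mul_single_of_ne (c := c) x j i hji d
  have h2 : ∀ (x y : Fin n) (c d : F), single x i c * single j y d = 0 :=
    fun x y c d => single_mul_single_of_ne (c := c) x i j hij d
  simp only [transvection, add_mul, mul_add, one_mul, mul_one,
    single_mul_single_same, h1, h2, add_zero, zero_add, mul_zero, zero_mul]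
  ext p q
  simp only [diagonal_apply, Matrix.add_apply, Matrix.one_apply, single, of_apply,
    Matrix.zero_apply]
  by_cases hpi : p = i <;> by_cases hpj : p = j <;> by_cases hqi : q = i <;>
    by_cases hqj : q = j <;> simp_all <;> split_ifs <;> simp_all

lemma diagPair_mem {i j : Fin n} (hij : i ≠ j) {a : F} (ha : a ≠ 0) :
    (diagonal fun l => if l = i then a else if l = j then a⁻¹ else 1) ∈ TS F n := by
  rw [diagPair_eq hij ha]
  exact mul_mem (mul_mem (mul_mem (mul_mem (mul_mem (transvection_mem hij a)
    (transvection_mem hij.symm _)) (transvection_mem hij a)) (transvection_mem hij _))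
    (transvection_mem hij.symm _)) (transvection_mem hij _)

lemma diagonal_mem (d : Fin n → F) (hd : ∏ i, d i = 1) : diagonal d ∈ TS F n := by
  cases n with
  | zero =>
    have : diagonal d = 1 := Subsingleton.elim _ _
    rw [this]; exact one_mem _
  | succ m =>
    set i₀ : Fin (m + 1) := 0 with hi₀def
    suffices H : ∀ s : Finset (Fin (m + 1)), ∀ d : Fin (m + 1) → F, ∏ i, d i = 1 →
        (∀ i, i ≠ i₀ → d i ≠ 1 → i ∈ s) → diagonal d ∈ TS F (m + 1) from
      H Finset.univ d hd fun i _ _ => Finset.mem_univ i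
    intro s
    induction s using Finset.induction_on with
    | empty =>
      intro d hd hs
      have h1 : ∀ i, i ≠ i₀ → d i = 1 := fun i hi => by
        by_contra h; simpa using hs i hi h
      have hd0 : d i₀ = 1 := by
        have := Finset.prod_eq_single i₀ (fun b _ hb => h1 b hb)
          (fun h => absurd (Finset.mem_univ i₀) h)
        rw [this] at hd; exact hd
      have : d = fun _ => 1 := by
        funext i
        rcases eq_or_ne i i₀ with rfl | hi
        · exact hd0
        · exact h1 i hi
      rw [this, diagonal_one]; exact one_mem _
    | @insert a s hanotmem IH =>
      intro d hd hs
      by_cases hcase : a = i₀ ∨ d a = 1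
      · apply IH d hd
        intro i hi hdi
        rcases Finset.mem_insert.mp (hs i hi hdi) with rfl | h
        · rcases hcase with h' | h'
          · exact absurd h' hi
          · exact absurd h' hdi
        · exact h
      push_neg at hcase
      obtain ⟨hai₀, hda⟩ := hcase
      have hda0 : d a ≠ 0 := by
        intro h
        have : ∏ i, d i = 0 := Finset.prod_eq_zero (Finset.mem_univ a) h
        rw [hd] at this; exact one_ne_zero this
      set d' : Fin (m + 1) → F :=
        fun l => if l = a then 1 else if l = i₀ then d i₀ * d a else d l with hd'def
      have keyfun : d = fun l =>
          (if l = a then d a else if l = i₀ then (d a)⁻¹ else 1) * d' l := by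
        funext l
        rcases eq_or_ne l a with rfl | hla
        · simp [hd'def, hai₀]
        · rcases eq_or_ne l i₀ with rfl | hli
          · simp only [hd'def, if_neg hla, if_pos rfl, if_true]
            field_simp
          · simp [hd'def, hla, hli]
      have key : diagonal d =
          (diagonal fun l => if l = a then d a else if l = i₀ then (d a)⁻¹ else 1) *
            diagonal d' := by
        rw [diagonal_mul_diagonal]
        exact congrArg diagonal keyfun
      have hmem2 : i₀ ∈ Finset.univ.erase a := Finset.mem_erase.mpr ⟨Ne.symm hai₀, Finset.mem_univ _⟩
      have e1 : ∏ l, d l = d a * (d i₀ * ∏ l ∈ (Finset.univ.erase a).erase i₀, d l) := by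
        rw [Finset.mul_prod_erase _ _ hmem2, Finset.mul_prod_erase _ _ (Finset.mem_univ a)]
      have e2 : ∏ l, d' l = d' a * (d' i₀ * ∏ l ∈ (Finset.univ.erase a).erase i₀, d' l) := by
        rw [Finset.mul_prod_erase _ _ hmem2, Finset.mul_prod_erase _ _ (Finset.mem_univ a)]
      have e3 : ∏ l ∈ (Finset.univ.erase a).erase i₀, d' l =
          ∏ l ∈ (Finset.univ.erase a).erase i₀, d l := by
        refine Finset.prod_congr rfl fun x hx => ?_
        have hxi : x ≠ i₀ := (Finset.mem_erase.mp hx).1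
        have hxa : x ≠ a := (Finset.mem_erase.mp (Finset.mem_erase.mp hx).2).1
        simp [hd'def, hxa, hxi]
      have hd'prod : ∏ l, d' l = 1 := by
        rw [e2, e3]
        rw [e1] at hd
        have ha' : d' a = 1 := by simp [hd'def]
        have hi' : d' i₀ = d i₀ * d a := by simp [hd'def, Ne.symm hai₀]
        rw [ha', hi', one_mul]
        rw [← hd]; ring
      rw [key]
      exact mul_mem (diagPair_mem hai₀ hda0)
        (IH d' hd'prod fun i hi hdi => by
          rcases eq_or_ne i a with rfl | hia
          · exact absurd (by simp [hd'def]) hdi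
          · have : d i ≠ 1 := by simpa [hd'def, hia, hi] using hdi
            rcases Finset.mem_insert.mp (hs i hi this) with rfl | h
            · exact absurd rfl hia
            · exact h)

lemma detOne_mem (M : Matrix (Fin n) (Fin n) F) (hM : M.det = 1) : M ∈ TS F n := by
  obtain ⟨L, L', D, h⟩ := Pivot.exists_list_transvec_mul_diagonal_mul_list_transvec M
  have hP : (L.map TransvectionStruct.toMatrix).prod ∈ TS F n :=
    Submonoid.list_prod_mem _ (by
      intro x hx
      obtain ⟨t, _, rfl⟩ := List.mem_map.mp hx
      exact Submonoid.subset_closure ⟨t, rfl⟩)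
  have hQ : (L'.map TransvectionStruct.toMatrix).prod ∈ TS F n :=
    Submonoid.list_prod_mem _ (by
      intro x hx
      obtain ⟨t, _, rfl⟩ := List.mem_map.mp hx
      exact Submonoid.subset_closure ⟨t, rfl⟩)
  have hD : ∏ i, D i = 1 := by
    have := congrArg Matrix.det h
    rw [hM, det_mul, det_mul, TransvectionStruct.det_toMatrix_prod,
      TransvectionStruct.det_toMatrix_prod, det_diagonal] at this
    exact (eq_comm.mp (by simpa using this))
  rw [h]
  exact mul_mem (mul_mem hP (diagonal_mem D hD)) hQ

variable {k : Type*} [Field k] [CharZero k]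

set_option maxHeartbeats 1000000 in
lemma ev_invariant (f : MvPolynomial (Fin n × Fin n) k) [Algebra k F]
    (hf : ∀ g : Matrix.SpecialLinearGroup (Fin n) k,
      aeval (fun q : Fin n × Fin n =>
        ∑ l : Fin n, C (g.val q.1 l) * X (l, q.2)) f = f)
    (M : Matrix (Fin n) (Fin n) F) (hM : M ∈ TS F n) :
    ∀ Y : Matrix (Fin n) (Fin n) F,
      aeval (fun q : Fin n × Fin n => (M * Y) q.1 q.2) f =
        aeval (fun q : Fin n × Fin n => Y q.1 q.2) f := by
  have hinv : ∀ (g : Matrix.SpecialLinearGroup (Fin n) k) (Y : Matrix (Fin n) (Fin n) F),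
      aeval (fun q : Fin n × Fin n => ((g.val.map (algebraMap k F)) * Y) q.1 q.2) f =
        aeval (fun q : Fin n × Fin n => Y q.1 q.2) f := by
    intro g Y
    have h2 : (fun q : Fin n × Fin n => ((g.val.map (algebraMap k F)) * Y) q.1 q.2) =
        fun q : Fin n × Fin n => aeval (R := k) (fun q : Fin n × Fin n => Y q.1 q.2)
          (∑ l : Fin n, C (g.val q.1 l) * X (l, q.2)) := by
      funext q
      simp [Matrix.mul_apply, Matrix.map_apply]
    have h3 := comp_aeval_apply
      (φ := aeval (R := k) (fun q : Fin n × Fin n => Y q.1 q.2))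
      (f := fun q : Fin n × Fin n => ∑ l : Fin n, C (g.val q.1 l) * X (l, q.2)) f
    rw [h2, ← h3, hf g]
  have htrans : ∀ (i j : Fin n), i ≠ j → ∀ (c : F) (Y : Matrix (Fin n) (Fin n) F),
      aeval (fun q : Fin n × Fin n => (transvection i j c * Y) q.1 q.2) f =
        aeval (fun q : Fin n × Fin n => Y q.1 q.2) f := by
    intro i j hij c Y
    set e : F := aeval (fun q : Fin n × Fin n => Y q.1 q.2) f with he
    set P : Polynomial F := aeval (fun q : Fin n × Fin n =>
        Polynomial.C (Y q.1 q.2) +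
          if q.1 = i then Polynomial.X * Polynomial.C (Y j q.2) else 0) f with hP
    have hev : ∀ c : F, Polynomial.eval c P =
        aeval (fun q : Fin n × Fin n => (transvection i j c * Y) q.1 q.2) f := by
      intro c
      have h1 : Polynomial.eval c P =
          ((Polynomial.aeval (R := F) c).restrictScalars k) P := by
        simp [Polynomial.coe_aeval_eq_eval]
      have h3 := comp_aeval_apply
        (φ := (Polynomial.aeval (R := F) c).restrictScalars k)
        (f := fun q : Fin n × Fin n => Polynomial.C (Y q.1 q.2) +
          if q.1 = i then Polynomial.X * Polynomial.C (Y j q.2) else 0) f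
      rw [h1, hP, h3]
      refine congrArg (fun g : Fin n × Fin n → F => aeval (R := k) g f) (funext fun q => ?_)
      obtain ⟨p, q⟩ := q
      dsimp only
      rcases eq_or_ne p i with rfl | hp
      · rw [Matrix.transvection_mul_apply_same]
        simp
        try ring
      · rw [Matrix.transvection_mul_apply_of_ne _ _ _ _ hp]
        simp [hp]
    have hroot : ∀ lam : k, Polynomial.eval (algebraMap k F lam) P = e := by
      intro lam
      rw [hev]
      have hmap : transvection i j ((algebraMap k F) lam) =
          (transvection i j lam).map (algebraMap k F) := by
        have hstd : ∀ (c : k), (single i j c).map (algebraMap k F) =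
            single i j ((algebraMap k F) c) := by
          intro c
          ext p q
          by_cases h : i = p ∧ j = q <;> simp [single, Matrix.map_apply, h]
        rw [transvection, transvection,
          Matrix.map_add _ (fun a b => map_add (algebraMap k F) a b),
          Matrix.map_one _ (map_zero _) (map_one _), hstd]
      rw [hmap, he]
      exact hinv ⟨transvection i j lam, by rw [det_transvection_of_ne i j hij]⟩ Y
    have hPC : P = Polynomial.C e := by
      by_contra hne
      have h0 : P - Polynomial.C e ≠ 0 := sub_ne_zero.mpr hne
      have hinf : {x | (P - Polynomial.C e).IsRoot x}.Infinite :=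
        (Set.infinite_range_of_injective (algebraMap k F).injective).mono
          (fun x hx => by
            obtain ⟨lam, rfl⟩ := hx
            simp [Polynomial.IsRoot, hroot lam])
      exact h0 (Polynomial.eq_zero_of_infinite_isRoot _ hinf)
    rw [← hev c, hPC, Polynomial.eval_C]
  refine Submonoid.closure_induction
    (motive := fun M _ => ∀ Y : Matrix (Fin n) (Fin n) F,
      aeval (fun q : Fin n × Fin n => (M * Y) q.1 q.2) f =
        aeval (fun q : Fin n × Fin n => Y q.1 q.2) f) ?_ ?_ ?_ hM
  · rintro x ⟨t, rfl⟩ Y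
    exact htrans t.i t.j t.hij t.c Y
  · intro Y
    rw [Matrix.one_mul]
  · intro x y hx hy px py Y
    rw [Matrix.mul_assoc]
    exact (px (y * Y)).trans (py Y)

end Stmt10Aux

set_option maxHeartbeats 1000000 in
/-- First fundamental theorem for `SL_n` acting by left
multiplication on `n×n` matrices: a polynomial function `f` on `M_n` (i.e.
`f ∈ k[x_{11},…,x_{nn}]`, char `k = 0`) satisfies `f(g·T) = f(T)` for all
`g ∈ SL_n(k)` if and only if `f` is a polynomial in the determinant, i.e.
`k[x_{ij}]^{SL_n} = k[det(x_{ij})]`. -/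
theorem stmt_10 (k : Type*) [Field k] [CharZero k] (n : ℕ)
    (f : MvPolynomial (Fin n × Fin n) k) :
    (∀ g : Matrix.SpecialLinearGroup (Fin n) k,
      MvPolynomial.aeval
        (fun q : Fin n × Fin n =>
          ∑ l : Fin n, MvPolynomial.C (g.val q.1 l) * MvPolynomial.X (l, q.2)) f = f) ↔
    f ∈ Algebra.adjoin k {(Matrix.of fun i j : Fin n => MvPolynomial.X (i, j)).det} := by
  constructor
  · intro hf
    rcases Nat.eq_zero_or_pos n with rfl | hn
    · obtain ⟨c, rfl⟩ := C_surjective (Fin 0 × Fin 0) f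
      exact Subalgebra.algebraMap_mem _ c
    · let F := FractionRing (MvPolynomial (Fin n × Fin n) k)
      set Xp : Matrix (Fin n) (Fin n) (MvPolynomial (Fin n × Fin n) k) :=
        Matrix.of fun i j : Fin n => X (i, j) with hXp
      have hdet : Xp.det ≠ 0 := by
        intro h
        have h2 := congrArg
          (aeval (R := k) (S₁ := k) fun q : Fin n × Fin n => if q.1 = q.2 then (1 : k) else 0) h
        rw [map_zero, AlgHom.map_det, AlgHom.mapMatrix_apply] at h2
        have h3 : Xp.map (aeval (R := k) fun q : Fin n × Fin n => if q.1 = q.2 then (1:k) else 0)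
            = (1 : Matrix (Fin n) (Fin n) k) := by
          ext p q
          simp [hXp, Matrix.map_apply, Matrix.one_apply]
        rw [h3, det_one] at h2
        exact one_ne_zero h2
      have hinj : Function.Injective (algebraMap (MvPolynomial (Fin n × Fin n) k) F) :=
        IsFractionRing.injective (MvPolynomial (Fin n × Fin n) k) F
      set Xm : Matrix (Fin n) (Fin n) F :=
        Xp.map (algebraMap (MvPolynomial (Fin n × Fin n) k) F) with hXm
      have hXmdet : Xm.det = algebraMap (MvPolynomial (Fin n × Fin n) k) F Xp.det :=
        ((algebraMap (MvPolynomial (Fin n × Fin n) k) F).map_det Xp).symm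
      have hδ : Xm.det ≠ 0 := by
        rw [hXmdet]
        intro h
        exact hdet (hinj (by rw [h, map_zero]))
      set i₀ : Fin n := ⟨0, hn⟩ with hi₀
      set D : Matrix (Fin n) (Fin n) F := diagonal (fun l => if l = i₀ then Xm.det else 1)
        with hD
      have hDdet : D.det = Xm.det := by
        simp [hD, det_diagonal, Finset.prod_ite_eq']
      have hDdet0 : D.det ≠ 0 := by rw [hDdet]; exact hδ
      set M : Matrix (Fin n) (Fin n) F := Xm * D⁻¹ with hM
      have hMdet : M.det = 1 := by
        rw [hM, det_mul, det_nonsing_inv, hDdet, Ring.inverse_eq_inv]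
        exact mul_inv_cancel₀ hδ
      have hMD : M * D = Xm := by
        rw [hM, Matrix.mul_assoc, Matrix.nonsing_inv_mul D (isUnit_iff_ne_zero.mpr hDdet0),
          Matrix.mul_one]
      have hev := Stmt10Aux.ev_invariant (F := F) f hf M (Stmt10Aux.detOne_mem M hMdet) D
      rw [hMD] at hev
      set dent : Fin n × Fin n → MvPolynomial (Fin n × Fin n) k := fun q =>
        if q.1 = q.2 then (if q.1 = i₀ then Xp.det else 1) else 0 with hdent
      have hL : aeval (fun q : Fin n × Fin n => Xm q.1 q.2) f =
          algebraMap (MvPolynomial (Fin n × Fin n) k) F f := by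
        have h3 := comp_aeval_apply (R := k)
          (φ := IsScalarTower.toAlgHom k (MvPolynomial (Fin n × Fin n) k) F)
          (f := fun q : Fin n × Fin n => X (q.1, q.2)) f
        have h4 : (fun q : Fin n × Fin n => Xm q.1 q.2) =
            fun q : Fin n × Fin n =>
              (IsScalarTower.toAlgHom k (MvPolynomial (Fin n × Fin n) k) F) (X (q.1, q.2)) := by
          funext q
          simp [hXm, hXp, Matrix.map_apply]
        rw [h4, ← h3]
        have h5 : aeval (R := k) (fun q : Fin n × Fin n => X (q.1, q.2)) f = f :=
          aeval_X_left_apply f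
        rw [h5]
        simp
      have hRR : aeval (fun q : Fin n × Fin n => D q.1 q.2) f =
          algebraMap (MvPolynomial (Fin n × Fin n) k) F (aeval dent f) := by
        have h4 := comp_aeval_apply (R := k)
          (φ := IsScalarTower.toAlgHom k (MvPolynomial (Fin n × Fin n) k) F)
          (f := dent) f
        have h5 : (fun q : Fin n × Fin n =>
            (IsScalarTower.toAlgHom k (MvPolynomial (Fin n × Fin n) k) F) (dent q)) =
            fun q : Fin n × Fin n => D q.1 q.2 := by
          funext q
          by_cases h1 : q.1 = q.2 <;> by_cases h2 : q.1 = i₀ <;>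
            simp [hdent, hD, diagonal_apply, h1, h2, hXmdet] <;> split_ifs <;> simp
        rw [← h5, ← h4]
        simp
      rw [hL, hRR] at hev
      have hfeq : f = aeval dent f := hinj hev
      set A := Algebra.adjoin k ({Xp.det} : Set (MvPolynomial (Fin n × Fin n) k)) with hA
      have hAd : Xp.det ∈ A := Algebra.subset_adjoin rfl
      set gA : Fin n × Fin n → A := fun q =>
        if q.1 = q.2 then (if q.1 = i₀ then ⟨Xp.det, hAd⟩ else 1) else 0 with hgA
      have hcoe : A.val (aeval gA f) = aeval dent f := by
        rw [comp_aeval_apply (R := k) (φ := A.val) (f := gA) f]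
        have h6 : (fun q : Fin n × Fin n => A.val (gA q)) = dent := by
          funext q
          by_cases h1 : q.1 = q.2 <;> by_cases h2 : q.1 = i₀ <;>
            simp [hgA, hdent, h1, h2] <;> split_ifs <;> simp
        rw [h6]
      have hfin : f = A.val (aeval gA f) := by rw [hcoe]; exact hfeq
      rw [hfin]
      exact (aeval gA f).2
  · intro hf g
    refine Algebra.adjoin_induction ?_ ?_ ?_ ?_ hf
    · intro x hx
      rw [Set.mem_singleton_iff] at hx
      subst hx
      rw [AlgHom.map_det, AlgHom.mapMatrix_apply]
      have h1 : (Matrix.of fun i j : Fin n => X (i, j)).map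
          (aeval (R := k) fun q : Fin n × Fin n =>
            ∑ l : Fin n, C (g.val q.1 l) * X (l, q.2)) =
          (g.val.map (C : k →+* MvPolynomial (Fin n × Fin n) k)) *
            (Matrix.of fun i j : Fin n => X (i, j)) := by
        ext p q
        simp [Matrix.map_apply, Matrix.mul_apply]
      rw [h1, det_mul, ← RingHom.mapMatrix_apply, ← RingHom.map_det, g.prop, _root_.map_one, one_mul]
    · intro r
      exact (aeval _).commutes r
    · intro x y _ _ hx hy
      rw [map_add, hx, hy]
    · intro x y _ _ hx hy
      rw [_root_.map_mul, hx, hy]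
end

section
/- Let k be a field of characteristic 0, E an n-dimensional vector space, and let SL(E) act diagonally on E^{⊗n}, g·(v₁⊗…⊗vₙ) = gv₁⊗…⊗gvₙ. Then the space of SL(E)-invariants (E^{⊗n})^{SL(E)} is the image of Λⁿ E under the antisymmetrization map, i.e. it is the one-dimensional space spanned by Σ_{σ∈Sₙ} sgn(σ) e_{σ(1)}⊗…⊗e_{σ(n)} for a basis e₁,…,eₙ of E. -/
open scoped TensorProduct

namespace Stmt11Aux

variable {k E : Type*} [Field k] [AddCommGroup E] [Module k E]
  {n : ℕ} (b : Module.Basis (Fin n) k E)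

noncomputable def T (f : Fin n → Fin n) : ⨂[k] _ : Fin n, E :=
  PiTensorProduct.tprod k fun i => b (f i)

noncomputable def φ (f : Fin n → Fin n) : (⨂[k] _ : Fin n, E) →ₗ[k] k :=
  PiTensorProduct.lift ((MultilinearMap.mkPiAlgebra k (Fin n) k).compLinearMap
    (fun i => b.coord (f i)))

lemma φ_T (f h : Fin n → Fin n) : φ b f (T b h) = if h = f then 1 else 0 := by
  rw [φ, T, PiTensorProduct.lift.tprod]
  simp only [MultilinearMap.compLinearMap_apply, MultilinearMap.mkPiAlgebra_apply,
    Module.Basis.coord_apply, Module.Basis.repr_self_apply]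
  by_cases hfh : h = f
  · subst hfh; simp
  · rw [if_neg hfh]
    obtain ⟨i, hi⟩ := Function.ne_iff.1 hfh
    exact Finset.prod_eq_zero (Finset.mem_univ i) (by rw [if_neg hi])

lemma expand (x : ⨂[k] _ : Fin n, E) :
    x = ∑ f : Fin n → Fin n, φ b f x • T b f := by
  have : LinearMap.id (R := k) (M := ⨂[k] _ : Fin n, E)
      = ∑ f : Fin n → Fin n, (LinearMap.toSpanSingleton k _ (T b f)) ∘ₗ φ b f := by
    apply PiTensorProduct.ext
    apply MultilinearMap.ext
    intro v
    simp only [LinearMap.compMultilinearMap_apply, LinearMap.id_apply, LinearMap.coe_sum,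
      Finset.sum_apply, LinearMap.comp_apply, LinearMap.toSpanSingleton_apply]
    have hv : (PiTensorProduct.tprod k (s := fun _ : Fin n => E)) v
        = (PiTensorProduct.tprod k) (fun i => ∑ j, b.repr (v i) j • b j) := by
      congr 1; funext i; rw [Module.Basis.sum_repr]
    have hφ : ∀ f : Fin n → Fin n, φ b f ((PiTensorProduct.tprod k) v)
        = ∏ i, b.repr (v i) (f i) := by
      intro f
      rw [φ, PiTensorProduct.lift.tprod]
      simp [MultilinearMap.compLinearMap_apply, MultilinearMap.mkPiAlgebra_apply,
        Module.Basis.coord_apply]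
    simp only [hφ]
    conv_lhs => rw [hv, MultilinearMap.map_sum]
    refine Finset.sum_congr rfl fun f _ => ?_
    rw [MultilinearMap.map_smul_univ]
    rfl
  conv_lhs => rw [← LinearMap.id_apply (R := k) x, this]
  simp [T]

lemma coeff_unique {c d : (Fin n → Fin n) → k}
    (h : ∑ f : Fin n → Fin n, c f • T b f = ∑ f : Fin n → Fin n, d f • T b f) : c = d := by
  funext g
  have := congrArg (φ b g) h
  simpa [map_sum, φ_T, mul_ite, Finset.sum_ite_eq'] using this

lemma det_constr (v : Fin n → E) :
    LinearMap.det (b.constr (M' := E) k v)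
      = Matrix.det (Matrix.of fun i j => b.repr (v j) i) := by
  rw [← LinearMap.det_toMatrix b]
  congr 1
  ext i j
  rw [LinearMap.toMatrix_apply, b.constr_basis]
  rfl

lemma det_constr_perm_smul (τ : Equiv.Perm (Fin n)) (s : Fin n → k) :
    LinearMap.det (b.constr (M' := E) k fun j => s j • b (τ j))
      = (Equiv.Perm.sign τ : ℤ) • ∏ j, s j := by
  rw [det_constr, Matrix.det_apply]
  rw [Finset.sum_eq_single τ]
  · congr 1
    refine Finset.prod_congr rfl fun i _ => ?_
    simp [Module.Basis.repr_self_apply]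
  · intro σ _ hστ
    obtain ⟨i, hi⟩ : ∃ i, τ i ≠ σ i := by
      by_contra hc
      push_neg at hc
      exact hστ (Equiv.ext fun i => (hc i).symm)
    refine smul_eq_zero_of_right _ (Finset.prod_eq_zero (Finset.mem_univ i) ?_)
    rw [Matrix.of_apply, map_smul, Finsupp.smul_apply, Module.Basis.repr_self_apply,
      if_neg (fun h => hi h), smul_zero]
  · simp

lemma det_constr_diag (d : Fin n → k) :
    LinearMap.det (b.constr (M' := E) k fun j => d j • b j) = ∏ j, d j := by
  have h := det_constr_perm_smul b 1 d
  simpa using h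

lemma sum_perm_helper {β : Type*} [AddCommMonoid β] (F : (Fin n → Fin n) → β)
    (h0 : ∀ f, ¬ Function.Bijective f → F f = 0) :
    ∑ f : Fin n → Fin n, F f = ∑ σ : Equiv.Perm (Fin n), F ⇑σ := by
  classical
  rw [← Finset.sum_filter_of_ne (p := fun f => Function.Bijective f)
    (fun f _ hf => by by_contra hb; exact hf (h0 f hb))]
  refine Finset.sum_bij' (fun f hf => Equiv.ofBijective f (Finset.mem_filter.1 hf).2)
    (fun σ _ => ⇑σ) ?_ ?_ ?_ ?_ ?_
  · intros; exact Finset.mem_univ _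
  · intro σ _
    exact Finset.mem_filter.2 ⟨Finset.mem_univ _, σ.bijective⟩
  · intro f hf; rfl
  · intro σ _; ext x; rfl
  · intro f hf; rfl

lemma sum_reindex {β : Type*} [AddCommMonoid β] (τ : Equiv.Perm (Fin n))
    (G : (Fin n → Fin n) → β) :
    ∑ h : Fin n → Fin n, G (⇑τ ∘ h) = ∑ h : Fin n → Fin n, G h := by
  refine Fintype.sum_bijective (fun h : Fin n → Fin n => ⇑τ ∘ h) ?_ _ _ (fun h => rfl)
  constructor
  · intro a₁ a₂ h12
    funext i
    exact τ.injective (congrFun h12 i)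
  · intro g
    exact ⟨⇑τ⁻¹ ∘ g, by funext i; simp⟩

lemma map_constr_diag_T (d : Fin n → k) (f : Fin n → Fin n) :
    PiTensorProduct.map
        (fun _ : Fin n => (b.constr (M' := E) k fun j => d j • b j : E →ₗ[k] E)) (T b f)
      = (∏ i, d (f i)) • T b f := by
  rw [T, PiTensorProduct.map_tprod]
  have h1 : (fun i => (b.constr (M' := E) k fun j => d j • b j) (b (f i)))
      = fun i => d (f i) • b (f i) := by
    funext i; simp [Module.Basis.constr_basis]
  rw [h1, MultilinearMap.map_smul_univ]

lemma map_constr_ps_T (s : Fin n → k) (τ : Equiv.Perm (Fin n)) (f : Fin n → Fin n) :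
    PiTensorProduct.map
        (fun _ : Fin n => (b.constr (M' := E) k fun j => s j • b (τ j) : E →ₗ[k] E)) (T b f)
      = (∏ i, s (f i)) • T b (⇑τ ∘ f) := by
  rw [T, PiTensorProduct.map_tprod]
  have h1 : (fun i => (b.constr (M' := E) k fun j => s j • b (τ j)) (b (f i)))
      = fun i => s (f i) • b (τ (f i)) := by
    funext i; simp [Module.Basis.constr_basis]
  rw [h1, MultilinearMap.map_smul_univ]
  rfl

noncomputable def Φ : E [⋀^Fin n]→ₗ[k] (⨂[k] _ : Fin n, E) :=
  MultilinearMap.alternatization (PiTensorProduct.tprod k)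

lemma omega_eq :
    (∑ σ : Equiv.Perm (Fin n),
        (Equiv.Perm.sign σ : ℤ) • PiTensorProduct.tprod k fun i => b (σ i)) = Φ ⇑b := by
  rw [Φ, MultilinearMap.alternatization_apply]
  refine Finset.sum_congr rfl fun σ _ => ?_
  rw [Units.smul_def]
  rfl

lemma map_Phi (g : E →ₗ[k] E) :
    PiTensorProduct.map (fun _ : Fin n => g) (Φ (k := k) (E := E) ⇑b)
      = LinearMap.det g • Φ (k := k) (E := E) ⇑b := by
  classical
  set M := LinearMap.toMatrix b b g with hM
  have hg : ∀ j, g (b j) = ∑ i, M i j • b i := by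
    intro j
    conv_lhs => rw [← Module.Basis.sum_repr b (g (b j))]
    refine Finset.sum_congr rfl fun i _ => ?_
    rw [hM, LinearMap.toMatrix_apply]
  have h1 : PiTensorProduct.map (fun _ : Fin n => g) (Φ (k := k) (E := E) ⇑b)
      = Φ (k := k) (E := E) (⇑g ∘ ⇑b) := by
    rw [Φ, MultilinearMap.alternatization_apply, MultilinearMap.alternatization_apply,
      map_sum]
    refine Finset.sum_congr rfl fun σ _ => ?_
    rw [Units.smul_def, Units.smul_def, map_zsmul]
    congr 1
    rw [MultilinearMap.domDomCongr_apply, MultilinearMap.domDomCongr_apply,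
      PiTensorProduct.map_tprod]
    rfl
  rw [h1]
  have h2 : (⇑g ∘ ⇑b : Fin n → E) = fun j => ∑ i, M i j • b i := by
    funext j; exact hg j
  rw [h2]
  have h3 : Φ (k := k) (E := E) (fun j => ∑ i, M i j • b i)
      = ∑ f : Fin n → Fin n, (∏ j, M (f j) j) • Φ (k := k) (E := E) (⇑b ∘ f) := by
    have := (Φ (k := k) (E := E) (n := n)).toMultilinearMap.map_sum
      (g := fun j i => M i j • b i)
    simp only [AlternatingMap.coe_multilinearMap] at this
    rw [this]
    refine Finset.sum_congr rfl fun f _ => ?_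
    simpa [Function.comp_def] using (Φ (k := k) (E := E) (n := n)).toMultilinearMap.map_smul_univ
      (fun i => M (f i) i) (fun i => b (f i))
  rw [h3]
  have h4 : ∀ f : Fin n → Fin n, ¬ Function.Bijective f →
      (∏ j, M (f j) j) • Φ (k := k) (E := E) (⇑b ∘ f) = 0 := by
    intro f hf
    have : ¬ Function.Injective (⇑b ∘ f) := by
      intro hinj
      exact hf ((Finite.injective_iff_bijective).1
        fun x y hxy => hinj (by simp [Function.comp, hxy]))
    rw [AlternatingMap.map_eq_zero_of_not_injective _ _ this, smul_zero]
  rw [sum_perm_helper _ h4]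
  have h5 : ∀ σ : Equiv.Perm (Fin n),
      (∏ j, M (σ j) j) • Φ (k := k) (E := E) (⇑b ∘ ⇑σ)
        = (Equiv.Perm.sign σ • ∏ j, M (σ j) j) • Φ (k := k) (E := E) ⇑b := by
    intro σ
    rw [AlternatingMap.map_perm, Units.smul_def, Units.smul_def, smul_assoc,
      smul_comm]
  simp only [h5]
  rw [← Finset.sum_smul, ← Matrix.det_apply, hM, LinearMap.det_toMatrix]

end Stmt11Aux

open Stmt11Aux in
/-- char `k = 0`, `E` an `n`-dimensional vector space, `SL(E)` acting
diagonally on `E^{⊗n}`.  The space of invariants `(E^{⊗n})^{SL(E)}` is the span of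
the antisymmetrized tensor `Σ_{σ∈Sₙ} sgn(σ) e_{σ(1)}⊗…⊗e_{σ(n)}` for a basis
`e₁,…,eₙ` of `E` (the image of `Λⁿ E`). -/
theorem stmt_11 (k E : Type*) [Field k] [CharZero k] [AddCommGroup E] [Module k E]
    [FiniteDimensional k E] (n : ℕ) (hn : Module.finrank k E = n)
    (b : Module.Basis (Fin n) k E) :
    {x : ⨂[k] _ : Fin n, E | ∀ g : E →ₗ[k] E, LinearMap.det g = 1 →
        PiTensorProduct.map (fun _ => g) x = x} =
      ↑(Submodule.span k
        {∑ σ : Equiv.Perm (Fin n),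
          (Equiv.Perm.sign σ : ℤ) • PiTensorProduct.tprod k fun i => b (σ i)}) := by
  classical
  ext x
  simp only [Set.mem_setOf_eq, SetLike.mem_coe, Submodule.mem_span_singleton]
  constructor
  · intro hx
    set c : (Fin n → Fin n) → k := fun f => φ b f x with hc
    have hexp : x = ∑ f : Fin n → Fin n, c f • T b f := expand b x
    -- Step 1: coefficients vanish off bijections
    have hK2 : ∀ f : Fin n → Fin n, ¬ Function.Bijective f → c f = 0 := by
      intro f hf
      have hn0 : n ≠ 0 := by
        rintro rfl
        exact hf ⟨fun a => a.elim0, fun y => y.elim0⟩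
      have hns : ¬ Function.Surjective f := fun hs =>
        hf ⟨Finite.injective_iff_surjective.2 hs, hs⟩
      obtain ⟨j0, hj0⟩ : ∃ j0, ∀ i, f i ≠ j0 := by
        simpa [Function.Surjective, not_forall, eq_comm] using hns
      set i0 : Fin n := ⟨0, Nat.pos_of_ne_zero hn0⟩ with hi0
      set j1 := f i0 with hj1
      have hj01 : j1 ≠ j0 := hj0 i0
      set d : Fin n → k := fun j => if j = j0 then 2 else if j = j1 then 2⁻¹ else 1 with hd
      have hprod : ∏ j, d j = 1 := by
        rw [← Finset.mul_prod_erase Finset.univ d (Finset.mem_univ j0),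
          ← Finset.mul_prod_erase _ d
            (Finset.mem_erase.2 ⟨hj01, Finset.mem_univ j1⟩)]
        rw [Finset.prod_eq_one]
        · have h0 : d j0 = 2 := by simp [hd]
          have h1 : d j1 = 2⁻¹ := by simp [hd, hj01]
          rw [h0, h1, mul_one, mul_inv_cancel₀ (two_ne_zero)]
        · intro j hj
          obtain ⟨hjj1, hjmem⟩ := Finset.mem_erase.1 hj
          obtain ⟨hjj0, _⟩ := Finset.mem_erase.1 hjmem
          simp [hd, hjj0, hjj1]
      have hdet : LinearMap.det (b.constr (M' := E) k fun j => d j • b j) = 1 := by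
        rw [det_constr_diag, hprod]
      have hinv := hx _ hdet
      have hmap : PiTensorProduct.map
          (fun _ : Fin n => (b.constr (M' := E) k fun j => d j • b j : E →ₗ[k] E)) x
          = ∑ h : Fin n → Fin n, ((∏ i, d (h i)) * c h) • T b h := by
        conv_lhs => rw [hexp]
        rw [map_sum]
        refine Finset.sum_congr rfl fun h _ => ?_
        rw [map_smul, map_constr_diag_T, smul_smul, mul_comm]
      have hco : (fun h : Fin n → Fin n => (∏ i, d (h i)) * c h) = c :=
        coeff_unique b (by rw [← hmap, hinv]; exact hexp)
      have hkey := congrFun hco f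
      have hprodf : (∏ i, d (f i))
          = (2⁻¹ : k) ^ (Finset.univ.filter (fun i => f i = j1)).card := by
        have : ∀ i, d (f i) = if f i = j1 then (2⁻¹ : k) else 1 := by
          intro i; simp [hd, hj0 i]
        rw [Finset.prod_congr rfl fun i _ => this i, Finset.prod_ite,
          Finset.prod_const, Finset.prod_const, one_pow, mul_one]
      have hm : 0 < (Finset.univ.filter (fun i => f i = j1)).card :=
        Finset.card_pos.2 ⟨i0, Finset.mem_filter.2 ⟨Finset.mem_univ _, rfl⟩⟩
      have hne1 : (∏ i, d (f i)) ≠ 1 := by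
        rw [hprodf]
        intro hone
        rw [inv_pow, inv_eq_one] at hone
        have : ((2 ^ (Finset.univ.filter (fun i => f i = j1)).card : ℕ) : k)
            = ((1 : ℕ) : k) := by push_cast; simpa using hone
        have h21 := Nat.cast_injective (R := k) this
        have h22 : 1 < 2 ^ (Finset.univ.filter (fun i => f i = j1)).card :=
          Nat.one_lt_pow hm.ne' one_lt_two
        omega
      by_contra hcf
      apply hne1
      have := mul_right_cancel₀ hcf (hkey.trans (one_mul (c f)).symm)
      exact this
    -- Step 2: swap relation
    have hK3 : ∀ (a b' : Fin n), a ≠ b' → ∀ σ : Equiv.Perm (Fin n),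
        c ⇑(Equiv.swap a b' * σ) = - c ⇑σ := by
      intro a b' hab σ
      set τ := Equiv.swap a b' with hτ
      set s : Fin n → k := fun j => if j = a then -1 else 1 with hs
      have hps : ∏ j, s j = -1 := by
        rw [hs]
        rw [Finset.prod_ite_eq' Finset.univ a fun _ => (-1 : k)]
        simp
      have hdet : LinearMap.det (b.constr (M' := E) k fun j => s j • b (τ j)) = 1 := by
        rw [det_constr_perm_smul, hps, Equiv.Perm.sign_swap hab]
        simp
      have hinv := hx _ hdet
      have hmap : PiTensorProduct.map
          (fun _ : Fin n => (b.constr (M' := E) k fun j => s j • b (τ j) : E →ₗ[k] E)) x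
          = ∑ h : Fin n → Fin n, (c (⇑τ⁻¹ ∘ h) * ∏ i, s (τ⁻¹ (h i))) • T b h := by
        conv_lhs => rw [hexp]
        rw [map_sum]
        have step : ∀ h : Fin n → Fin n,
            PiTensorProduct.map
              (fun _ : Fin n => (b.constr (M' := E) k fun j => s j • b (τ j) : E →ₗ[k] E))
              (c h • T b h)
            = (fun h' => (c (⇑τ⁻¹ ∘ h') * ∏ i, s (τ⁻¹ (h' i))) • T b h') (⇑τ ∘ h) := by
          intro h
          rw [map_smul, map_constr_ps_T, smul_smul]
          simp only []
          congr 1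
          have e1 : (⇑τ⁻¹ ∘ (⇑τ ∘ h)) = h := by
            funext i; simp
          have e2 : (fun i => s (τ⁻¹ ((⇑τ ∘ h) i))) = fun i => s (h i) := by
            funext i; simp
          rw [e1, e2, mul_comm]
        rw [Finset.sum_congr rfl fun h _ => step h]
        exact sum_reindex τ fun h' => (c (⇑τ⁻¹ ∘ h') * ∏ i, s (τ⁻¹ (h' i))) • T b h'
      have hco : (fun h : Fin n → Fin n => c (⇑τ⁻¹ ∘ h) * ∏ i, s (τ⁻¹ (h i))) = c :=
        coeff_unique b (by rw [← hmap, hinv]; exact hexp)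
      have hkey := congrFun hco ⇑(τ * σ)
      have e1 : (⇑τ⁻¹ ∘ ⇑(τ * σ)) = ⇑σ := by
        funext i; simp
      have e2 : (∏ i, s (τ⁻¹ ((τ * σ) i))) = -1 := by
        have : (fun i => s (τ⁻¹ ((τ * σ) i))) = fun i => s (σ i) := by
          funext i; simp
        rw [this, Equiv.prod_comp σ s, hps]
      rw [e1, e2] at hkey
      rw [← hkey]
      ring
    -- Step 3: coefficients proportional to sign
    have hK4 : ∀ σ : Equiv.Perm (Fin n),
        c ⇑σ = ((Equiv.Perm.sign σ : ℤ) : k) * c ⇑(1 : Equiv.Perm (Fin n)) := by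
      intro σ
      refine Equiv.Perm.swap_induction_on σ ?_ ?_
      · simp
      · intro f u v huv ih
        rw [hK3 u v huv f, ih, Equiv.Perm.sign_mul, Equiv.Perm.sign_swap huv]
        push_cast
        ring
    refine ⟨c ⇑(1 : Equiv.Perm (Fin n)), ?_⟩
    have hfin : x = c ⇑(1 : Equiv.Perm (Fin n)) •
        (∑ σ : Equiv.Perm (Fin n),
          (Equiv.Perm.sign σ : ℤ) • PiTensorProduct.tprod k fun i => b (σ i)) := by
      conv_lhs => rw [hexp]
      rw [sum_perm_helper (fun f => c f • T b f)
        (fun f hf => by simp only [hK2 f hf, zero_smul])]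
      rw [Finset.smul_sum]
      refine Finset.sum_congr rfl fun σ _ => ?_
      rw [hK4 σ, mul_comm, mul_smul, Int.cast_smul_eq_zsmul]
      rfl
    exact hfin.symm
  · rintro ⟨a, rfl⟩ g hg
    rw [map_smul, omega_eq b, map_Phi b g, hg, one_smul]
end

section
/- Let k be a field of characteristic 0, E an n-dimensional vector space, and m a positive integer not divisible by n. Then (E^{⊗m})^{SL(E)} = 0, i.e. the diagonal SL(E)-action on E^{⊗m} has no nonzero invariants. -/
open scoped TensorProduct

open PiTensorProduct Finset in
/-- char `k = 0`, `E` an `n`-dimensional vector space, `m` a positive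
integer not divisible by `n`.  The diagonal `SL(E)`-action on `E^{⊗m}` has no
nonzero invariants: `(E^{⊗m})^{SL(E)} = 0`. -/
theorem stmt_12 (k E : Type*) [Field k] [CharZero k] [AddCommGroup E] [Module k E]
    [FiniteDimensional k E] (n m : ℕ) (hn : Module.finrank k E = n)
    (hm : 0 < m) (hnm : ¬ n ∣ m) :
    {x : ⨂[k] _ : Fin m, E | ∀ g : E →ₗ[k] E, LinearMap.det g = 1 →
        PiTensorProduct.map (fun _ => g) x = x} = {0} := by
  subst hn
  set N := Module.finrank k E with hN
  have b : Module.Basis (Fin N) k E := Module.finBasis k E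
  set B : (Fin m → Fin N) → ⨂[k] _ : Fin m, E :=
    fun f => tprod k (fun l => b (f l)) with hB
  ext x
  simp only [Set.mem_setOf_eq, Set.mem_singleton_iff]
  constructor
  · intro hx
    -- span claim
    have hspan : ∀ y : ⨂[k] (i : Fin m), E, y ∈ Submodule.span k (Set.range B) := by
      intro y
      induction y using PiTensorProduct.induction_on with
      | smul_tprod r v =>
        refine Submodule.smul_mem _ r ?_
        have hv : tprod k v
            = ∑ f : Fin m → Fin N, (∏ l, b.repr (v l) (f l)) • B f := by
          calc tprod k v
              = tprod k (fun l => ∑ t : Fin N, b.repr (v l) t • b t) := by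
                congr 1; funext l; exact (b.sum_repr (v l)).symm
            _ = ∑ f : Fin m → Fin N,
                  tprod k (fun l => b.repr (v l) (f l) • b (f l)) :=
                MultilinearMap.map_sum _ _
            _ = _ := by
                refine Finset.sum_congr rfl fun f _ => ?_
                exact MultilinearMap.map_smul_univ _ _ _
        rw [hv]
        exact Submodule.sum_mem _ fun f _ =>
          Submodule.smul_mem _ _ (Submodule.subset_span ⟨f, rfl⟩)
      | add y z hy hz => exact Submodule.add_mem _ hy hz
    obtain ⟨c, hc⟩ := (Submodule.mem_span_range_iff_exists_fun k).mp (hspan x)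
    -- dual functionals
    set Φ : (Fin m → Fin N) → (⨂[k] (_ : Fin m), E) →ₗ[k] k := fun f₀ =>
      PiTensorProduct.lift
        ((MultilinearMap.mkPiAlgebra k (Fin m) k).compLinearMap fun l => b.coord (f₀ l)) with hΦ
    have hΦB : ∀ f₀ f, Φ f₀ (B f) = if f = f₀ then 1 else 0 := by
      intro f₀ f
      simp only [hΦ, hB, lift.tprod, MultilinearMap.compLinearMap_apply,
        MultilinearMap.mkPiAlgebra_apply]
      by_cases h : f = f₀
      · subst h; simp [Module.Basis.coord_apply, Module.Basis.repr_self]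
      · obtain ⟨l, hl⟩ := Function.ne_iff.mp h
        rw [if_neg h]
        refine Finset.prod_eq_zero (Finset.mem_univ l) ?_
        simp [Module.Basis.coord_apply, Module.Basis.repr_self_apply, hl]
    -- every coefficient vanishes
    have hc0 : ∀ f₀, c f₀ = 0 := by
      intro f₀
      by_contra hcf
      -- counts
      set a : Fin N → ℕ := fun t => (univ.filter fun l => f₀ l = t).card with ha
      have hsum : ∑ t, a t = m := by
        rw [ha, ← Finset.card_eq_sum_card_fiberwise (fun l _ => Finset.mem_univ (f₀ l)),
          Finset.card_univ, Fintype.card_fin]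
      have hne : ∃ i j : Fin N, a i ≠ a j := by
        by_contra h
        push_neg at h
        refine hnm ⟨a (f₀ ⟨0, hm⟩), ?_⟩
        have hconst : ∑ t : Fin N, a t = N * a (f₀ ⟨0, hm⟩) := by
          rw [Finset.sum_congr rfl (fun t _ => h t (f₀ ⟨0, hm⟩)),
            Finset.sum_const, Finset.card_univ, Fintype.card_fin, smul_eq_mul]
        exact hsum.symm.trans hconst
      obtain ⟨i, j, hij⟩ := hne
      have hij' : i ≠ j := fun h => hij (by rw [h])
      set d : Fin N → k := fun t => if t = i then 2 else if t = j then 2⁻¹ else 1 with hd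
      have hdi : d i = 2 := by simp [hd]
      have hdj : d j = 2⁻¹ := by simp [hd, hij'.symm]
      set g : E →ₗ[k] E := b.constr k (fun t => d t • b t) with hg
      have hmat : LinearMap.toMatrix b b g = Matrix.diagonal d := by
        ext r s
        rw [LinearMap.toMatrix_apply, hg, Module.Basis.constr_basis]
        rcases eq_or_ne r s with h | h
        · subst h; simp [Matrix.diagonal_apply_eq, Module.Basis.repr_self]
        · simp [Matrix.diagonal_apply_ne _ h, Module.Basis.repr_self_apply, h.symm]
      have hdet : LinearMap.det g = 1 := by
        rw [← LinearMap.det_toMatrix b, hmat, Matrix.det_diagonal,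
          ← Finset.mul_prod_erase _ _ (Finset.mem_univ i),
          ← Finset.mul_prod_erase _ _ (Finset.mem_erase.mpr ⟨hij'.symm, Finset.mem_univ j⟩),
          Finset.prod_eq_one (fun t ht => ?_), hdi, hdj]
        · rw [mul_one, mul_inv_cancel₀ (two_ne_zero)]
        · simp only [Finset.mem_erase] at ht
          simp [hd, ht.1, ht.2.1]
      have hmapB : ∀ f, PiTensorProduct.map (fun _ => g) (B f) = (∏ l, d (f l)) • B f := by
        intro f
        simp only [hB, PiTensorProduct.map_tprod]
        have h2 : (fun l => g (b (f l))) = fun l => d (f l) • b (f l) := by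
          funext l; rw [hg, Module.Basis.constr_basis]
        rw [h2, MultilinearMap.map_smul_univ]
      have h1 : Φ f₀ x = c f₀ := by
        rw [← hc, map_sum]
        simp only [map_smul, hΦB, smul_eq_mul, mul_ite, mul_one, mul_zero]
        simp [Finset.sum_ite_eq']
      have h2 : Φ f₀ x = (∏ l, d (f₀ l)) * c f₀ := by
        conv_lhs => rw [← hx g hdet, ← hc]
        rw [map_sum, map_sum]
        simp only [map_smul, hmapB, map_smul, hΦB, smul_eq_mul, mul_ite, mul_one, mul_zero]
        simp [Finset.sum_ite_eq']
        ring
      have hprod1 : (∏ l, d (f₀ l)) = 1 := by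
        have h3 : (∏ l, d (f₀ l)) * c f₀ = 1 * c f₀ := by rw [one_mul]; exact h2.symm.trans h1
        exact mul_right_cancel₀ hcf h3
      -- compute the product
      have hprod : (∏ l, d (f₀ l)) = 2 ^ (a i) * (2 : k)⁻¹ ^ (a j) := by
        rw [← Finset.prod_filter_mul_prod_filter_not univ (fun l => f₀ l = i)
            (fun l => d (f₀ l)),
          ← Finset.prod_filter_mul_prod_filter_not
            (univ.filter fun l => ¬ f₀ l = i) (fun l => f₀ l = j) (fun l => d (f₀ l))]
        have hfil : (univ.filter fun l => ¬ f₀ l = i).filter (fun l => f₀ l = j)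
            = univ.filter fun l => f₀ l = j := by
          rw [Finset.filter_filter]
          ext l
          simp only [Finset.mem_filter, Finset.mem_univ, true_and]
          exact ⟨fun h => h.2, fun h => ⟨by rw [h]; exact hij'.symm, h⟩⟩
        have hA : (∏ l ∈ univ.filter (fun l => f₀ l = i), d (f₀ l)) = 2 ^ a i := by
          have heq : ∀ l ∈ univ.filter (fun l => f₀ l = i), d (f₀ l) = 2 := by
            intro l hl
            simp only [Finset.mem_filter] at hl
            rw [hl.2, hdi]
          rw [Finset.prod_congr rfl heq, Finset.prod_const]
        have hBp : (∏ l ∈ (univ.filter fun l => ¬ f₀ l = i).filter (fun l => f₀ l = j),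
            d (f₀ l)) = (2 : k)⁻¹ ^ a j := by
          have heq : ∀ l ∈ (univ.filter fun l => ¬ f₀ l = i).filter (fun l => f₀ l = j),
              d (f₀ l) = 2⁻¹ := by
            intro l hl
            simp only [Finset.mem_filter] at hl
            rw [hl.2, hdj]
          rw [Finset.prod_congr rfl heq, Finset.prod_const, hfil]
        have hC : (∏ l ∈ (univ.filter fun l => ¬ f₀ l = i).filter (fun l => ¬ f₀ l = j),
            d (f₀ l)) = 1 := by
          refine Finset.prod_eq_one fun l hl => ?_
          simp only [Finset.mem_filter] at hl
          simp [hd, hl.1.2, hl.2]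
        rw [hA, hBp, hC, mul_one]
      rw [hprod] at hprod1
      have h2aj : ((2 : k) ^ (a j)) ≠ 0 := pow_ne_zero _ two_ne_zero
      rw [inv_pow, mul_inv_eq_one₀ h2aj] at hprod1
      have : ((2 ^ (a i) : ℕ) : k) = ((2 ^ (a j) : ℕ) : k) := by push_cast; exact hprod1
      exact hij (Nat.pow_right_injective le_rfl (Nat.cast_injective this))
    rw [← hc]
    exact Finset.sum_eq_zero fun f _ => by rw [hc0 f, zero_smul]
  · rintro rfl
    intro g hg
    simp
end

section
/- Let k be an infinite field of characteristic 0 and E an n-dimensional vector space. The image of the group-algebra map k[S_m] → End_k(E^{⊗m}), σ ↦ σ̃ (permutation of tensor factors), equals the subalgebra of GL(E)-invariants (End_k(E)^{⊗m})^{GL(E)} = End_{GL(E)}(E^{⊗m}) (Schur–Weyl duality, surjectivity half). -/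
open scoped TensorProduct




open Finset in
lemma aux_poly_span {k M : Type*} [Field k] [AddCommGroup M] [Module k M]
    (N : Submodule k M) (n : ℕ) (c : ℕ → M)
    (h : {t : k | (∑ d ∈ Finset.range n, t ^ d • c d) ∈ N}.Infinite) :
    ∀ d, d < n → c d ∈ N := by
  intro d hd
  have hmk : ∀ x : M, N.mkQ x = 0 ↔ x ∈ N := fun x => by
    rw [Submodule.mkQ_apply, Submodule.Quotient.mk_eq_zero]
  rw [← hmk]
  rw [← Module.forall_dual_apply_eq_zero_iff k]
  intro φ
  set p : Polynomial k :=
    ∑ e ∈ Finset.range n, Polynomial.C (φ (N.mkQ (c e))) * Polynomial.X ^ e with hp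
  have hp0 : p = 0 := by
    apply Polynomial.eq_zero_of_infinite_isRoot
    apply h.mono
    intro t ht
    simp only [Set.mem_setOf_eq] at ht ⊢
    have : p.eval t = φ (N.mkQ (∑ d ∈ Finset.range n, t ^ d • c d)) := by
      rw [map_sum, map_sum, hp, Polynomial.eval_finset_sum]
      refine Finset.sum_congr rfl fun e _ => ?_
      rw [Polynomial.eval_mul, Polynomial.eval_C, Polynomial.eval_pow, Polynomial.eval_X,
        map_smul, map_smul, smul_eq_mul, mul_comm]
    rw [Polynomial.IsRoot, this, (hmk _).2 ht, map_zero]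
  have := congrArg (fun q => Polynomial.coeff q d) hp0
  simpa [hp, Polynomial.finset_sum_coeff, Polynomial.coeff_C_mul, Polynomial.coeff_X_pow,
    Finset.sum_ite_eq' (Finset.range n), hd] using this

lemma aux_DC {k V : Type*} [Field k] [AddCommGroup V] [Module k V]
    {G : Type*} [Group G] [Fintype G] (hG : (Fintype.card G : k) ≠ 0)
    (ρ : G → Module.End k V) (hρ1 : ρ 1 = 1) (hρm : ∀ g h, ρ g * ρ h = ρ (g * h))
    {ι : Type*} [Fintype ι] [DecidableEq ι] (e : ι → V)
    (he : Submodule.span k (Set.range e) = ⊤)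
    (A : Module.End k V)
    (hA : ∀ f : Module.End k V, (∀ g, f * ρ g = ρ g * f) → A * f = f * A) :
    A ∈ Submodule.span k (Set.range ρ) := by
  classical
  set S := Submodule.span k (Set.range ρ) with hS
  -- componentwise action on ι → V
  set ρW : G → Module.End k (ι → V) :=
    fun g => LinearMap.pi (fun i => (ρ g) ∘ₗ (LinearMap.proj i)) with hρW
  have hρW_apply : ∀ g (w : ι → V) (i : ι), ρW g w i = ρ g (w i) := fun g w i => rfl
  have hρWm : ∀ g h, ρW g * ρW h = ρW (g * h) := by
    intro g h
    apply LinearMap.ext; intro w; funext i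
    show ρ g ((ρW h w) i) = ρ (g * h) (w i)
    rw [hρW_apply, ← hρm, Module.End.mul_apply]
  have hρW1 : ρW 1 = 1 := by
    apply LinearMap.ext; intro w; funext i
    show ρ 1 (w i) = w i
    rw [hρ1]; rfl
  have hρWinv : ∀ g, ρW g * ρW g⁻¹ = 1 := by
    intro g; rw [hρWm, mul_inv_cancel, hρW1]
  -- S is closed under left multiplication by ρ g
  have hSmul : ∀ g, ∀ b ∈ S, ρ g * b ∈ S := by
    intro g b hb
    induction hb using Submodule.span_induction with
    | mem x hx =>
      obtain ⟨h, rfl⟩ := hx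
      exact Submodule.subset_span ⟨g * h, (hρm g h).symm⟩
    | zero => simp only [mul_zero]; exact Submodule.zero_mem S
    | add x y _ _ hx hy => rw [mul_add]; exact Submodule.add_mem S hx hy
    | smul c x _ hx => rw [mul_smul_comm]; exact Submodule.smul_mem S c hx
  set Φ : Module.End k V →ₗ[k] (ι → V) := LinearMap.pi fun i => LinearMap.applyₗ (e i) with hΦ
  have hΦ_apply : ∀ (b : Module.End k V) (i : ι), Φ b i = b (e i) := fun b i => rfl
  set U := S.map Φ with hU
  have hUinv : ∀ g, ∀ w ∈ U, ρW g w ∈ U := by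
    rintro g w ⟨b, hb, rfl⟩
    exact ⟨ρ g * b, hSmul g b hb, rfl⟩
  obtain ⟨U', hc⟩ := Submodule.exists_isCompl U
  set p0 : Module.End k (ι → V) := U.subtype ∘ₗ Submodule.projectionOnto U U' hc with hp0def
  have hp0 : ∀ w ∈ U, p0 w = w := by
    intro w hw
    exact congrArg Subtype.val (Submodule.projectionOnto_apply_left hc ⟨w, hw⟩)
  have hp0r : ∀ w, p0 w ∈ U := fun w => (Submodule.projectionOnto U U' hc w).2
  set π : Module.End k (ι → V) :=
    (Fintype.card G : k)⁻¹ • ∑ g : G, ρW g * p0 * ρW g⁻¹ with hπ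
  have hπU : ∀ w ∈ U, π w = w := by
    intro w hw
    have : ∀ g : G, (ρW g * p0 * ρW g⁻¹) w = w := by
      intro g
      have h1 : ρW g⁻¹ w ∈ U := hUinv g⁻¹ w hw
      have h2 : (ρW g * p0 * ρW g⁻¹) w = ρW g (p0 (ρW g⁻¹ w)) := rfl
      rw [h2, hp0 _ h1, ← Module.End.mul_apply, hρWinv, Module.End.one_apply]
    rw [hπ, LinearMap.smul_apply, LinearMap.sum_apply, Finset.sum_congr rfl fun g _ => this g,
      Finset.sum_const, Finset.card_univ, ← Nat.cast_smul_eq_nsmul k, smul_smul,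
      inv_mul_cancel₀ hG, one_smul]
  have hπr : ∀ w, π w ∈ U := by
    intro w
    rw [hπ, LinearMap.smul_apply, LinearMap.sum_apply]
    refine Submodule.smul_mem U _ (Submodule.sum_mem U fun g _ => ?_)
    exact hUinv g _ (hp0r _)
  have hπequiv : ∀ h, ρW h * π = π * ρW h := by
    intro h
    have key : ∀ g : G, ρW h * (ρW g * p0 * ρW g⁻¹) = (ρW (h * g) * p0 * ρW (h * g)⁻¹) * ρW h := by
      intro g
      have h1 : ρW (h * g)⁻¹ * ρW h = ρW g⁻¹ := by
        rw [hρWm]; congr 1; group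
      have h2 : ρW (h * g) = ρW h * ρW g := (hρWm h g).symm
      rw [← h1, h2]
      simp only [mul_assoc]
    calc ρW h * π = (Fintype.card G : k)⁻¹ • ∑ g : G, ρW h * (ρW g * p0 * ρW g⁻¹) := by
          rw [hπ, Algebra.mul_smul_comm, Finset.mul_sum]
      _ = (Fintype.card G : k)⁻¹ • ∑ g : G, (ρW (h * g) * p0 * ρW (h * g)⁻¹) * ρW h := by
          rw [Finset.sum_congr rfl fun g _ => key g]
      _ = (Fintype.card G : k)⁻¹ • ∑ g : G, (ρW g * p0 * ρW g⁻¹) * ρW h := by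
          congr 1
          exact Fintype.sum_equiv (Equiv.mulLeft h) _ _ fun g => rfl
      _ = π * ρW h := by rw [hπ, smul_mul_assoc, Finset.sum_mul]
  -- matrix components of π commute with every ρ g, hence with A
  set q : ι → ι → Module.End k V :=
    fun i j => (LinearMap.proj j) ∘ₗ π ∘ₗ LinearMap.single k (fun _ : ι => V) i with hq
  have hq_apply : ∀ i j v, q i j v = π (Pi.single i v) j := fun i j v => rfl
  have hsingle : ∀ g i (v : V), Pi.single (M := fun _ : ι => V) i (ρ g v) = ρW g (Pi.single i v) := by
    intro g i v
    funext l
    rcases eq_or_ne l i with rfl | hl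
    · simp [hρW_apply]
    · simp [hρW_apply, Pi.single_eq_of_ne hl]
  have hqcomm : ∀ i j g, q i j * ρ g = ρ g * q i j := by
    intro i j g
    ext v
    rw [Module.End.mul_apply, Module.End.mul_apply, hq_apply, hq_apply, hsingle]
    have h2 := congrFun (congrArg (fun t : Module.End k (ι → V) => t (Pi.single i v)) (hπequiv g)) j
    simp only [Module.End.mul_apply] at h2
    rw [← h2, hρW_apply]
  have hqA : ∀ i j, A * q i j = q i j * A := fun i j => hA _ (fun g => hqcomm i j g)
  -- the element e of ι → V lies in U and π fixes it
  have heU : (e : ι → V) ∈ U := ⟨1, Submodule.subset_span ⟨1, hρ1⟩, by funext i; rfl⟩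
  have hπe : π e = e := hπU e heU
  -- now compute π (fun i => A (e i))
  have hw1 : π (fun i => A (e i)) = fun i => A (e i) := by
    funext j
    have hcomm : ∀ i, π (Pi.single i (A (e i))) j = A (π (Pi.single i (e i)) j) := by
      intro i
      have h3 := congrArg (fun (t : Module.End k V) => t (e i)) (hqA i j)
      simpa [Module.End.mul_apply, hq_apply] using h3.symm
    have e1 : (fun i => A (e i)) = ∑ i : ι, Pi.single i (A (e i)) :=
      (Finset.univ_sum_single _).symm
    have e2 : (∑ i : ι, π (Pi.single i (e i))) = π e := by
      rw [← map_sum, Finset.univ_sum_single]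
    calc π (fun i => A (e i)) j = (∑ i : ι, π (Pi.single i (A (e i)))) j := by
          rw [e1, map_sum]
      _ = ∑ i : ι, π (Pi.single i (A (e i))) j := Finset.sum_apply _ _ _
      _ = ∑ i : ι, A (π (Pi.single i (e i)) j) := Finset.sum_congr rfl fun i _ => hcomm i
      _ = A (∑ i : ι, π (Pi.single i (e i)) j) := (map_sum A _ _).symm
      _ = A ((∑ i : ι, π (Pi.single i (e i))) j) := by rw [Finset.sum_apply]
      _ = A (π e j) := by rw [e2]
      _ = A (e j) := by rw [hπe]
  have hw1U : (fun i => A (e i)) ∈ U := by rw [← hw1]; exact hπr _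
  obtain ⟨b, hb, hbe⟩ := hw1U
  have : A = b := by
    symm
    apply LinearMap.ext_on he
    rintro x ⟨i, rfl⟩
    exact congrFun hbe i
  rw [this]; exact hb

lemma aux_comb {k : Type*} [Field k] {m : ℕ} (r : Fin m → Fin m) :
    ∑ S : Finset (Fin m), (if ∀ i, r i ∈ S then ((-1 : k) ^ (m - S.card)) else 0)
      = if Function.Surjective r then 1 else 0 := by
  classical
  set T : Finset (Fin m) := Finset.image r Finset.univ with hT
  have hc1 : ∀ S : Finset (Fin m), (∀ i, r i ∈ S) ↔ T ⊆ S := by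
    intro S; constructor
    · intro h x hx
      obtain ⟨i, _, rfl⟩ := Finset.mem_image.mp hx
      exact h i
    · intro h i; exact h (Finset.mem_image_of_mem r (Finset.mem_univ i))
  have reindex : ∑ S : Finset (Fin m), (if ∀ i, r i ∈ S then ((-1:k)^(m - S.card)) else 0)
      = ∑ C : Finset (Fin m), (if C ⊆ Tᶜ then ((-1:k)^C.card) else 0) := by
    apply Fintype.sum_equiv (Function.Involutive.toPerm _ (compl_compl (α := Finset (Fin m))))
    intro S
    have h1 : (∀ i, r i ∈ S) ↔ Sᶜ ⊆ Tᶜ := by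
      rw [hc1, Finset.compl_subset_compl]
    have h2 : m - S.card = (Sᶜ).card := by
      rw [Finset.card_compl, Fintype.card_fin]
    rw [h2]
    exact if_congr h1 rfl rfl
  rw [reindex]
  have step2 : ∑ C : Finset (Fin m), (if C ⊆ Tᶜ then ((-1:k)^C.card) else 0)
      = ∑ C ∈ (Tᶜ).powerset, (-1:k)^C.card := by
    rw [Finset.sum_congr rfl fun C _ => if_congr (Finset.mem_powerset).symm rfl rfl]
    rw [Finset.sum_ite_mem, Finset.univ_inter]
  rw [step2]
  have hz : ∑ C ∈ (Tᶜ).powerset, (-1:k)^C.card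
      = ((∑ C ∈ (Tᶜ).powerset, (-1:ℤ)^C.card : ℤ) : k) := by push_cast; rfl
  have hiff : Tᶜ = ∅ ↔ Function.Surjective r := by
    rw [Finset.compl_eq_empty_iff]
    constructor
    · intro h y
      have : y ∈ T := h ▸ Finset.mem_univ y
      obtain ⟨i, _, hi⟩ := Finset.mem_image.mp this
      exact ⟨i, hi⟩
    · intro h
      apply Finset.eq_univ_iff_forall.mpr
      intro y
      obtain ⟨i, hi⟩ := h y
      exact Finset.mem_image.mpr ⟨i, Finset.mem_univ i, hi⟩
  rw [hz, Finset.sum_powerset_neg_one_pow_card]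
  by_cases hs : Function.Surjective r
  · rw [if_pos (hiff.mpr hs), if_pos hs, Int.cast_one]
  · rw [if_neg (fun h => hs (hiff.mp h)), if_neg hs, Int.cast_zero]

section aux3
variable {k E : Type*} [Field k] [AddCommGroup E] [Module k E] {m : ℕ}
variable {ι : Type*} [Fintype ι] [DecidableEq ι]

noncomputable def bv (e : Module.Basis ι k E) (K : Fin m → ι) : ⨂[k] _ : Fin m, E :=
  PiTensorProduct.tprod k fun i => e (K i)

noncomputable def xi (e : Module.Basis ι k E) (J : Fin m → ι) : (⨂[k] _ : Fin m, E) →ₗ[k] k :=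
  PiTensorProduct.lift
    ((MultilinearMap.mkPiAlgebra k (Fin m) k).compLinearMap fun i => e.coord (J i))

lemma xi_tprod (e : Module.Basis ι k E) (J : Fin m → ι) (x : Fin m → E) :
    xi e J (PiTensorProduct.tprod k x) = ∏ i, e.coord (J i) (x i) := by
  simp [xi, PiTensorProduct.lift.tprod]

lemma xi_bv (e : Module.Basis ι k E) (J K : Fin m → ι) :
    xi e J (bv e K) = if J = K then 1 else 0 := by
  rw [bv, xi_tprod]
  calc ∏ i, e.coord (J i) (e (K i)) = ∏ i, if K i = J i then (1 : k) else 0 := by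
        refine Finset.prod_congr rfl fun i _ => ?_
        rw [Module.Basis.coord_apply, Module.Basis.repr_self, Finsupp.single_apply]
    _ = if J = K then 1 else 0 := by
        rw [Finset.prod_boole]
        by_cases h : J = K
        · subst h; simp
        · rw [if_neg (fun hall => h (funext fun i => (hall i (Finset.mem_univ i)).symm)),
            if_neg h]

lemma span_bv (e : Module.Basis ι k E) : Submodule.span k (Set.range (bv (m := m) e)) = ⊤ := by
  rw [eq_top_iff, ← PiTensorProduct.span_tprod_eq_top, Submodule.span_le]
  rintro _ ⟨x, rfl⟩
  have hx : x = fun i => ∑ j : ι, e.repr (x i) j • e j :=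
    funext fun i => (e.sum_repr (x i)).symm
  have : PiTensorProduct.tprod k x
      = ∑ K : Fin m → ι, (∏ i, e.repr (x i) (K i)) • bv e K := by
    conv_lhs => rw [hx]
    rw [MultilinearMap.map_sum_finset (PiTensorProduct.tprod k)
      (fun i j => e.repr (x i) j • e j) (fun _ => Finset.univ), Fintype.piFinset_univ]
    exact Finset.sum_congr rfl fun K _ =>
      MultilinearMap.map_smul_univ (PiTensorProduct.tprod k) _ _
  rw [this]
  exact Submodule.sum_mem _ fun K _ =>
    Submodule.smul_mem _ _ (Submodule.subset_span ⟨K, rfl⟩)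

lemma sum_smulRight (e : Module.Basis ι k E) :
    (∑ I : Fin m → ι, LinearMap.smulRight (xi e I) (bv e I)) = LinearMap.id := by
  apply LinearMap.ext_on (span_bv e)
  rintro _ ⟨K, rfl⟩
  simp only [LinearMap.sum_apply, LinearMap.smulRight_apply, xi_bv, LinearMap.id_apply,
    ite_smul, one_smul, zero_smul, Finset.sum_ite_eq', Finset.mem_univ, if_true]

noncomputable def EIJ (e : Module.Basis ι k E) (I J : Fin m → ι) :
    Module.End k (⨂[k] _ : Fin m, E) :=
  LinearMap.smulRight (xi e J) (bv e I)

lemma end_repr (e : Module.Basis ι k E) (f : Module.End k (⨂[k] _ : Fin m, E)) :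
    f = ∑ I : Fin m → ι, ∑ J : Fin m → ι, xi e I (f (bv e J)) • EIJ e I J := by
  apply LinearMap.ext_on (span_bv e)
  rintro _ ⟨K, rfl⟩
  calc f (bv e K)
      = (∑ I : Fin m → ι, LinearMap.smulRight (xi e I) (bv e I)) (f (bv e K)) := by
        rw [sum_smulRight]; rfl
    _ = ∑ I : Fin m → ι, xi e I (f (bv e K)) • bv e I := by
        rw [LinearMap.sum_apply]
        exact Finset.sum_congr rfl fun I _ => rfl
    _ = ∑ I : Fin m → ι, ∑ J : Fin m → ι,
          (xi e I (f (bv e J)) • EIJ e I J) (bv e K) := by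
        refine Finset.sum_congr rfl fun I _ => ?_
        have : ∀ J : Fin m → ι, (xi e I (f (bv e J)) • EIJ e I J) (bv e K)
            = if J = K then xi e I (f (bv e J)) • bv e I else 0 := by
          intro J
          rw [LinearMap.smul_apply, EIJ, LinearMap.smulRight_apply, xi_bv]
          split
          · rw [one_smul]
          · rw [zero_smul, smul_zero]
        rw [Finset.sum_congr rfl fun J _ => this J, Finset.sum_ite_eq', if_pos (Finset.mem_univ K)]
    _ = (∑ I : Fin m → ι, ∑ J : Fin m → ι, xi e I (f (bv e J)) • EIJ e I J) (bv e K) := by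
        rw [LinearMap.sum_apply]
        exact Finset.sum_congr rfl fun I _ => (LinearMap.sum_apply _ _ _).symm

lemma prod_ite_one_zero {m : ℕ} (p : Fin m → Prop) [DecidablePred p] [Decidable (∀ i, p i)] :
    (∏ i : Fin m, if p i then (1:k) else 0) = if (∀ i, p i) then 1 else 0 := by
  by_cases h : ∀ i, p i
  · rw [if_pos h, Finset.prod_congr rfl fun i _ => if_pos (h i), Finset.prod_const_one]
  · rw [if_neg h]
    push_neg at h
    obtain ⟨i, hi⟩ := h
    exact Finset.prod_eq_zero (Finset.mem_univ i) (if_neg hi)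

lemma hPbv (e : Module.Basis ι k E) (P : Equiv.Perm (Fin m) → Module.End k (⨂[k] _ : Fin m, E))
    (hP : ∀ (σ : Equiv.Perm (Fin m)) (x : Fin m → E),
      P σ (PiTensorProduct.tprod k x) = PiTensorProduct.tprod k fun i => x (σ i))
    (σ : Equiv.Perm (Fin m)) (K : Fin m → ι) :
    P σ (bv e K) = bv e (fun i => K (σ i)) := hP σ (fun i => e (K i))

lemma sym_EIJ (e : Module.Basis ι k E) (P : Equiv.Perm (Fin m) → Module.End k (⨂[k] _ : Fin m, E))
    (hP : ∀ (σ : Equiv.Perm (Fin m)) (x : Fin m → E),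
      P σ (PiTensorProduct.tprod k x) = PiTensorProduct.tprod k fun i => x (σ i))
    (I J : Fin m → ι) :
    ∑ σ : Equiv.Perm (Fin m), P σ⁻¹ * EIJ e I J * P σ
      = ∑ S : Finset (Fin m),
          ((-1:k) ^ (m - S.card)) •
            (PiTensorProduct.map (fun _ : Fin m =>
              ∑ p ∈ S, LinearMap.smulRight (e.coord (J p)) (e (I p))) :
              Module.End k (⨂[k] _ : Fin m, E)) := by
  classical
  apply LinearMap.ext_on (span_bv e)
  rintro _ ⟨K, rfl⟩
  -- the common summand
  set w : (Fin m → Fin m) → (⨂[k] _ : Fin m, E) :=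
    fun r => (if ∀ i, K i = J (r i) then (1:k) else 0) • bv e (fun i => I (r i)) with hw
  have keyL : (∑ σ : Equiv.Perm (Fin m), P σ⁻¹ * EIJ e I J * P σ) (bv e K)
      = ∑ σ : Equiv.Perm (Fin m), w ⇑σ := by
    rw [LinearMap.sum_apply]
    refine Fintype.sum_equiv (Equiv.inv (Equiv.Perm (Fin m))) _ _ fun σ => ?_
    have t1 : (P σ⁻¹ * EIJ e I J * P σ) (bv e K)
        = P σ⁻¹ (EIJ e I J (P σ (bv e K))) := rfl
    rw [t1, hPbv e P hP, EIJ, LinearMap.smulRight_apply, xi_bv, map_smul, hPbv e P hP]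
    simp only [Equiv.inv_apply, hw]
    have hcond : (J = fun i => K (σ i)) ↔ (∀ i, K i = J (σ⁻¹ i)) := by
      constructor
      · intro h i
        rw [h]; simp
      · intro h
        funext i
        rw [h (σ i)]; simp
    rw [if_congr hcond rfl rfl]
  have keyR : (∑ S : Finset (Fin m),
        ((-1:k) ^ (m - S.card)) •
          (PiTensorProduct.map (fun _ : Fin m =>
            ∑ p ∈ S, LinearMap.smulRight (e.coord (J p)) (e (I p))) :
            Module.End k (⨂[k] _ : Fin m, E))) (bv e K)
      = ∑ σ : Equiv.Perm (Fin m), w ⇑σ := by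
    rw [LinearMap.sum_apply]
    have step1 : ∀ S : Finset (Fin m),
        (((-1:k) ^ (m - S.card)) •
          (PiTensorProduct.map (fun _ : Fin m =>
            ∑ p ∈ S, LinearMap.smulRight (e.coord (J p)) (e (I p))) :
            Module.End k (⨂[k] _ : Fin m, E))) (bv e K)
        = ∑ r : Fin m → Fin m,
            (if ∀ i, r i ∈ S then ((-1:k) ^ (m - S.card)) else 0) • w r := by
      intro S
      rw [LinearMap.smul_apply]
      have e1 : (PiTensorProduct.map (fun _ : Fin m =>
            ∑ p ∈ S, LinearMap.smulRight (e.coord (J p)) (e (I p))) :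
            Module.End k (⨂[k] _ : Fin m, E)) (bv e K)
          = ∑ r ∈ Fintype.piFinset (fun _ : Fin m => S), w r := by
        rw [bv, PiTensorProduct.map_tprod]
        have e2 : ∀ i : Fin m,
            (∑ p ∈ S, LinearMap.smulRight (e.coord (J p)) (e (I p))) (e (K i))
            = ∑ p ∈ S, (if K i = J p then (1:k) else 0) • e (I p) := by
          intro i
          rw [LinearMap.sum_apply]
          refine Finset.sum_congr rfl fun p _ => ?_
          rw [LinearMap.smulRight_apply, Module.Basis.coord_apply, Module.Basis.repr_self,
            Finsupp.single_apply]
        rw [show (fun i => (∑ p ∈ S, LinearMap.smulRight (e.coord (J p)) (e (I p))) (e (K i)))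
            = fun i => ∑ p ∈ S, (if K i = J p then (1:k) else 0) • e (I p) from
          funext fun i => e2 i]
        rw [MultilinearMap.map_sum_finset (PiTensorProduct.tprod k)
          (fun i p => (if K i = J p then (1:k) else 0) • e (I p)) (fun _ => S)]
        refine Finset.sum_congr rfl fun r _ => ?_
        rw [MultilinearMap.map_smul_univ, hw]
        congr 1
        exact prod_ite_one_zero (fun i => K i = J (r i))
      rw [e1]
      have e3 : ∑ r ∈ Fintype.piFinset (fun _ : Fin m => S), w r
          = ∑ r : Fin m → Fin m, if (∀ i, r i ∈ S) then w r else 0 := by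
        symm
        calc ∑ r : Fin m → Fin m, (if (∀ i, r i ∈ S) then w r else 0)
            = ∑ r : Fin m → Fin m, (if r ∈ Fintype.piFinset (fun _ : Fin m => S)
                then w r else 0) := by
              refine Finset.sum_congr rfl fun r _ => ?_
              by_cases h : ∀ i, r i ∈ S
              · rw [if_pos h, if_pos (Fintype.mem_piFinset.mpr h)]
              · rw [if_neg h, if_neg (fun hm => h (Fintype.mem_piFinset.mp hm))]
          _ = ∑ r ∈ Fintype.piFinset (fun _ : Fin m => S), w r := by
              rw [Finset.sum_ite_mem, Finset.univ_inter]
      rw [e3, Finset.smul_sum]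
      refine Finset.sum_congr rfl fun r _ => ?_
      by_cases h : ∀ i, r i ∈ S
      · rw [if_pos h, if_pos h]
      · rw [if_neg h, if_neg h, smul_zero, zero_smul]
    rw [Finset.sum_congr rfl fun S _ => step1 S, Finset.sum_comm]
    have step2 : ∀ r : Fin m → Fin m,
        (∑ S : Finset (Fin m), (if ∀ i, r i ∈ S then ((-1:k) ^ (m - S.card)) else 0) • w r)
        = (if Function.Surjective r then w r else 0) := by
      intro r
      rw [← Finset.sum_smul, aux_comb]
      by_cases h : Function.Surjective r
      · rw [if_pos h, if_pos h, one_smul]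
      · rw [if_neg h, if_neg h, zero_smul]
    rw [Finset.sum_congr rfl fun r _ => step2 r]
    rw [← Finset.sum_filter]
    refine (Finset.sum_bij (fun (σ : Equiv.Perm (Fin m)) _ => ⇑σ) ?_ ?_ ?_ ?_).symm
    · intro σ _
      simp only [Finset.mem_filter, Finset.mem_univ, true_and]
      exact σ.surjective
    · intro σ _ τ _ h
      exact Equiv.coe_fn_injective h
    · intro r hr
      simp only [Finset.mem_filter, Finset.mem_univ, true_and] at hr
      have hb : Function.Bijective r := Finite.surjective_iff_bijective.mp hr
      exact ⟨Equiv.ofBijective r hb, Finset.mem_univ _, rfl⟩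
    · intro σ _
      rfl
  rw [keyL, keyR]

lemma sym_mem (e : Module.Basis ι k E) (P : Equiv.Perm (Fin m) → Module.End k (⨂[k] _ : Fin m, E))
    (hP : ∀ (σ : Equiv.Perm (Fin m)) (x : Fin m → E),
      P σ (PiTensorProduct.tprod k x) = PiTensorProduct.tprod k fun i => x (σ i))
    (f : Module.End k (⨂[k] _ : Fin m, E)) :
    (∑ σ : Equiv.Perm (Fin m), P σ⁻¹ * f * P σ) ∈
      Submodule.span k (Set.range (fun a : Module.End k E =>
        (PiTensorProduct.map (fun _ : Fin m => a) : Module.End k (⨂[k] _ : Fin m, E)))) := by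
  classical
  have hrw : ∑ σ : Equiv.Perm (Fin m), P σ⁻¹ * f * P σ
      = ∑ I : Fin m → ι, ∑ J : Fin m → ι, xi e I (f (bv e J)) •
          ∑ σ : Equiv.Perm (Fin m), (P σ⁻¹ * EIJ e I J * P σ) := by
    calc ∑ σ : Equiv.Perm (Fin m), P σ⁻¹ * f * P σ
        = ∑ σ : Equiv.Perm (Fin m), ∑ I : Fin m → ι, ∑ J : Fin m → ι,
            xi e I (f (bv e J)) • (P σ⁻¹ * EIJ e I J * P σ) := by
          refine Finset.sum_congr rfl fun σ _ => ?_
          conv_lhs => rw [end_repr e f]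
          simp only [Finset.mul_sum, Finset.sum_mul, Algebra.mul_smul_comm, smul_mul_assoc]
      _ = _ := by
          rw [Finset.sum_comm]
          refine Finset.sum_congr rfl fun I _ => ?_
          rw [Finset.sum_comm]
          refine Finset.sum_congr rfl fun J _ => ?_
          rw [Finset.smul_sum]
  rw [hrw]
  refine Submodule.sum_mem _ fun I _ => Submodule.sum_mem _ fun J _ =>
    Submodule.smul_mem _ _ ?_
  rw [sym_EIJ e P hP I J]
  exact Submodule.sum_mem _ fun S _ => Submodule.smul_mem _ _ (Submodule.subset_span ⟨_, rfl⟩)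

lemma Pia_mem [CharZero k] [FiniteDimensional k E] (a : Module.End k E) :
    (PiTensorProduct.map (fun _ : Fin m => a) : Module.End k (⨂[k] _ : Fin m, E)) ∈
      Submodule.span k (Set.range (fun g : E ≃ₗ[k] E =>
        (PiTensorProduct.map (fun _ : Fin m => g.toLinearMap) :
          Module.End k (⨂[k] _ : Fin m, E)))) := by
  classical
  set N := Submodule.span k (Set.range (fun g : E ≃ₗ[k] E =>
        (PiTensorProduct.map (fun _ : Fin m => g.toLinearMap) :
          Module.End k (⨂[k] _ : Fin m, E)))) with hN
  set DS : Finset (Fin m) → Module.End k (⨂[k] _ : Fin m, E) := fun S =>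
    PiTensorProduct.map (S.piecewise (fun _ => a) (fun _ => LinearMap.id)) with hDS
  have expand : ∀ t : k,
      (PiTensorProduct.map (fun _ : Fin m => a + t • LinearMap.id) :
        Module.End k (⨂[k] _ : Fin m, E))
      = ∑ S : Finset (Fin m), t ^ (m - S.card) • DS S := by
    intro t
    apply LinearMap.ext_on (PiTensorProduct.span_tprod_eq_top (R := k) (s := fun _ : Fin m => E))
    rintro _ ⟨x, rfl⟩
    rw [PiTensorProduct.map_tprod]
    have h1 : (fun i => ((a + t • LinearMap.id : Module.End k E)) (x i))
        = (fun i => a (x i)) + (fun i => t • x i) := by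
      funext i
      simp [LinearMap.add_apply, LinearMap.smul_apply]
    rw [h1, MultilinearMap.map_add_univ, LinearMap.sum_apply]
    refine Finset.sum_congr rfl fun S _ => ?_
    have h2 : S.piecewise (fun i => a (x i)) (fun i => t • x i)
        = Sᶜ.piecewise (fun i => t • (Sᶜ.piecewise x (fun i => a (x i))) i)
            (Sᶜ.piecewise x (fun i => a (x i))) := by
      funext i
      by_cases h : i ∈ S
      · have h' : i ∉ Sᶜ := by simp [h]
        rw [Finset.piecewise_eq_of_mem _ _ _ h, Finset.piecewise_eq_of_notMem _ _ _ h',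
          Finset.piecewise_eq_of_notMem _ _ _ h']
      · have h' : i ∈ Sᶜ := by simp [h]
        rw [Finset.piecewise_eq_of_notMem _ _ _ h, Finset.piecewise_eq_of_mem _ _ _ h',
          Finset.piecewise_eq_of_mem _ _ _ h']
    rw [h2, MultilinearMap.map_piecewise_smul, Finset.prod_const, LinearMap.smul_apply]
    congr 1
    · rw [Finset.card_compl, Fintype.card_fin]
    · rw [hDS, PiTensorProduct.map_tprod]
      congr 1
      funext i
      by_cases h : i ∈ S
      · have h' : i ∉ Sᶜ := by simp [h]
        rw [Finset.piecewise_eq_of_notMem _ _ _ h', Finset.piecewise_eq_of_mem _ _ _ h]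
      · have h' : i ∈ Sᶜ := by simp [h]
        rw [Finset.piecewise_eq_of_mem _ _ _ h', Finset.piecewise_eq_of_notMem _ _ _ h]
        rfl
  set C : ℕ → Module.End k (⨂[k] _ : Fin m, E) := fun d =>
    ∑ S ∈ Finset.univ.filter (fun S : Finset (Fin m) => m - S.card = d), DS S with hC
  have expand2 : ∀ t : k,
      (PiTensorProduct.map (fun _ : Fin m => a + t • LinearMap.id) :
        Module.End k (⨂[k] _ : Fin m, E))
      = ∑ d ∈ Finset.range (m+1), t ^ d • C d := by
    intro t
    rw [expand t]
    rw [← Finset.sum_fiberwise_of_maps_to (g := fun S : Finset (Fin m) => m - S.card)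
      (fun S _ => Finset.mem_range.mpr (Nat.lt_succ_of_le (Nat.sub_le _ _)))
      (fun S => t ^ (m - S.card) • DS S)]
    refine Finset.sum_congr rfl fun d _ => ?_
    rw [hC, Finset.smul_sum]
    refine Finset.sum_congr rfl fun S hS => ?_
    rw [(Finset.mem_filter.mp hS).2]
  have hroots : {x : k | (minpoly k a).IsRoot x}.Finite := by
    by_contra hinf
    exact minpoly.ne_zero (Algebra.IsIntegral.isIntegral (R := k) a)
      (Polynomial.eq_zero_of_infinite_isRoot _ hinf)
  have hBadFin : {t : k | ¬ Function.Bijective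
      ⇑(a + t • (LinearMap.id : Module.End k E))}.Finite := by
    have hsub : {t : k | ¬ Function.Bijective ⇑(a + t • (LinearMap.id : Module.End k E))}
        ⊆ (fun t : k => -t) ⁻¹' {x | (minpoly k a).IsRoot x} := by
      intro t ht
      simp only [Set.mem_setOf_eq] at ht
      simp only [Set.mem_preimage, Set.mem_setOf_eq]
      rw [← Module.End.hasEigenvalue_iff_isRoot]
      have hni : ¬ Function.Injective ⇑(a + t • (LinearMap.id : Module.End k E)) := by
        intro hinj
        exact ht ⟨hinj, (LinearMap.injective_iff_surjective).mp hinj⟩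
      rw [← LinearMap.ker_eq_bot] at hni
      obtain ⟨x, hxker, hx0⟩ := (Submodule.ne_bot_iff _).mp hni
      have hx : a x + t • x = 0 := by
        simpa [LinearMap.add_apply, LinearMap.smul_apply] using (LinearMap.mem_ker).mp hxker
      have hax : a x = (-t) • x := by
        rw [neg_smul]
        exact eq_neg_of_add_eq_zero_left hx
      exact Module.End.hasEigenvalue_of_hasEigenvector
        ⟨Module.End.mem_eigenspace_iff.mpr hax, hx0⟩
    exact Set.Finite.subset (hroots.preimage (Set.injOn_of_injective neg_injective)) hsub
  have hGoodInf : {t : k | Function.Bijective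
      ⇑(a + t • (LinearMap.id : Module.End k E))}.Infinite := by
    have hset : {t : k | Function.Bijective ⇑(a + t • (LinearMap.id : Module.End k E))}
        = {t : k | ¬ Function.Bijective ⇑(a + t • (LinearMap.id : Module.End k E))}ᶜ := by
      ext t
      simp [Set.mem_compl_iff, not_not]
    rw [hset]
    exact hBadFin.infinite_compl
  have hval : {t : k | (∑ d ∈ Finset.range (m+1), t ^ d • C d) ∈ N}.Infinite := by
    apply hGoodInf.mono
    intro t ht
    simp only [Set.mem_setOf_eq] at ht ⊢
    rw [← expand2 t]
    set g := LinearEquiv.ofBijective (a + t • (LinearMap.id : Module.End k E)) ht with hg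
    have hgm : (PiTensorProduct.map (fun _ : Fin m => a + t • LinearMap.id) :
        Module.End k (⨂[k] _ : Fin m, E)) = PiTensorProduct.map (fun _ => g.toLinearMap) := by
      congr 1
    exact hgm ▸ Submodule.subset_span ⟨g, rfl⟩
  have hC0 : C 0 ∈ N := aux_poly_span N (m+1) C hval 0 (Nat.succ_pos m)
  have hfilter : Finset.univ.filter (fun S : Finset (Fin m) => m - S.card = 0)
      = {Finset.univ} := by
    ext S
    simp only [Finset.mem_filter, Finset.mem_univ, true_and, Finset.mem_singleton]
    constructor
    · intro h
      have h1 : m ≤ S.card := Nat.sub_eq_zero_iff_le.mp h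
      have h2 : S.card ≤ m := by simpa using Finset.card_le_univ S
      have h3 : S.card = Fintype.card (Fin m) := by
        rw [Fintype.card_fin]
        exact le_antisymm h2 h1
      exact (Finset.card_eq_iff_eq_univ S).mp h3
    · rintro rfl
      simp
  have hC0eq : C 0 = PiTensorProduct.map (fun _ : Fin m => a) := by
    simp only [hC, hDS]
    rw [hfilter, Finset.sum_singleton, Finset.piecewise_univ]
  rwa [hC0eq] at hC0

end aux3

/-- Schur–Weyl duality (surjectivity half).  `k` an (infinite) field
of characteristic `0`, `E` an `n`-dimensional vector space, `GL(E)` acting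
diagonally on `E^{⊗m}` and `S_m` acting by permuting tensor factors (operators
`P σ` with `P σ (e₁⊗…⊗e_m) = e_{σ(1)}⊗…⊗e_{σ(m)}`).  The commutant
`End_{GL(E)}(E^{⊗m})` — the endomorphisms commuting with every `g ∈ GL(E)` —
equals the span of the permutation operators `P σ`, `σ ∈ S_m`. -/
theorem stmt_19 (k E : Type*) [Field k] [CharZero k] [AddCommGroup E] [Module k E]
    [FiniteDimensional k E] (m : ℕ)
    (P : Equiv.Perm (Fin m) → Module.End k (⨂[k] _ : Fin m, E))
    (hP : ∀ (σ : Equiv.Perm (Fin m)) (f : Fin m → E),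
      P σ (PiTensorProduct.tprod k f) = PiTensorProduct.tprod k fun i => f (σ i)) :
    {A : Module.End k (⨂[k] _ : Fin m, E) |
      ∀ g : E ≃ₗ[k] E,
        A ∘ₗ PiTensorProduct.map (fun _ => g.toLinearMap) =
          PiTensorProduct.map (fun _ => g.toLinearMap) ∘ₗ A} =
      ↑(Submodule.span k (Set.range P)) := by
  classical
  set N := Submodule.span k (Set.range (fun g : E ≃ₗ[k] E =>
    (PiTensorProduct.map (fun _ : Fin m => g.toLinearMap) :
      Module.End k (⨂[k] _ : Fin m, E)))) with hN
  have hPmul : ∀ σ τ : Equiv.Perm (Fin m), P σ * P τ = P (τ * σ) := by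
    intro σ τ
    apply LinearMap.ext_on (PiTensorProduct.span_tprod_eq_top (R := k) (s := fun _ : Fin m => E))
    rintro _ ⟨x, rfl⟩
    rw [Module.End.mul_apply, hP, hP, hP]
    rfl
  have hP1 : P 1 = 1 := by
    apply LinearMap.ext_on (PiTensorProduct.span_tprod_eq_top (R := k) (s := fun _ : Fin m => E))
    rintro _ ⟨x, rfl⟩
    rw [hP, Module.End.one_apply]
    rfl
  have hPinv : ∀ σ : Equiv.Perm (Fin m), P σ⁻¹ * P σ = 1 := by
    intro σ
    rw [hPmul, mul_inv_cancel, hP1]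
  set e : Module.Basis (Fin (Module.finrank k E)) k E := Module.finBasis k E with he
  have hcard : ((Fintype.card (Equiv.Perm (Fin m)) : k)) ≠ 0 :=
    Nat.cast_ne_zero.mpr Fintype.card_ne_zero
  have key : ∀ f : Module.End k (⨂[k] _ : Fin m, E),
      (∀ σ, f * P σ = P σ * f) → f ∈ N := by
    intro f hf
    have h1 : ∀ σ : Equiv.Perm (Fin m), P σ⁻¹ * f * P σ = f := by
      intro σ
      rw [mul_assoc, hf σ, ← mul_assoc, hPinv σ, one_mul]
    have h2 : ∑ σ : Equiv.Perm (Fin m), P σ⁻¹ * f * P σ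
        = (Fintype.card (Equiv.Perm (Fin m))) • f := by
      rw [Finset.sum_congr rfl fun σ _ => h1 σ, Finset.sum_const, Finset.card_univ]
    have h3 := sym_mem e P hP f
    have h4 : Submodule.span k (Set.range fun a : Module.End k E =>
        (PiTensorProduct.map (fun _ : Fin m => a) :
          Module.End k (⨂[k] _ : Fin m, E))) ≤ N := by
      rw [Submodule.span_le]
      rintro _ ⟨a, rfl⟩
      exact Pia_mem a
    have h5 := h4 h3
    rw [h2] at h5
    have h6 : f = (Fintype.card (Equiv.Perm (Fin m)) : k)⁻¹ •
        ((Fintype.card (Equiv.Perm (Fin m)) : k) • f) := by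
      rw [smul_smul, inv_mul_cancel₀ hcard, one_smul]
    rw [h6]
    apply Submodule.smul_mem
    rw [Nat.cast_smul_eq_nsmul]
    exact h5
  ext A
  simp only [Set.mem_setOf_eq, SetLike.mem_coe]
  constructor
  · intro hA
    have hAN : ∀ h ∈ N, A * h = h * A := by
      intro h hh
      induction hh using Submodule.span_induction with
      | mem x hx =>
        obtain ⟨g, rfl⟩ := hx
        exact hA g
      | zero => rw [mul_zero, zero_mul]
      | add x y _ _ hx hy => rw [mul_add, add_mul, hx, hy]
      | smul c x _ hx => rw [mul_smul_comm, smul_mul_assoc, hx]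
    have hDC := aux_DC (k := k) (V := ⨂[k] _ : Fin m, E)
      (G := Equiv.Perm (Fin m)) hcard
      (fun σ => P σ⁻¹)
      (by show P (1 : Equiv.Perm (Fin m))⁻¹ = 1; rw [inv_one, hP1])
      (fun σ τ => by
        show P σ⁻¹ * P τ⁻¹ = P (σ * τ)⁻¹
        rw [hPmul, mul_inv_rev])
      (bv e) (span_bv e) A
      (by
        intro f hf
        have hfc : ∀ σ, f * P σ = P σ * f := by
          intro σ
          simpa using hf σ⁻¹
        exact hAN f (key f hfc))
    have hrange : Set.range (fun σ : Equiv.Perm (Fin m) => P σ⁻¹) = Set.range P := by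
      ext x
      constructor
      · rintro ⟨σ, rfl⟩; exact ⟨σ⁻¹, rfl⟩
      · rintro ⟨σ, rfl⟩; exact ⟨σ⁻¹, by show P σ⁻¹⁻¹ = P σ; rw [inv_inv]⟩
    rwa [hrange] at hDC
  · intro hA g
    induction hA using Submodule.span_induction with
    | mem x hx =>
      obtain ⟨σ, rfl⟩ := hx
      apply LinearMap.ext_on (PiTensorProduct.span_tprod_eq_top (R := k) (s := fun _ : Fin m => E))
      rintro _ ⟨x, rfl⟩
      simp only [LinearMap.comp_apply, PiTensorProduct.map_tprod, hP]
    | zero => rw [LinearMap.zero_comp, LinearMap.comp_zero]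
    | add x y _ _ hx hy => rw [LinearMap.add_comp, LinearMap.comp_add, hx, hy]
    | smul c x _ hx => rw [LinearMap.smul_comp, LinearMap.comp_smul, hx]
end
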